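/- arXiv:1801.10352 — 11 statements merged into one kernel-verified Lean document; each statement's English description precedes it below -/
import Mathlib

section
/- For any complex matrix c : Matrix (Fin m) (Fin n) ℂ, the von Neumann entropies of the two reduced density matrices of the corresponding pure state agree: S(c * cᴴ) = S(cᴴ * c), i.e. ∑ᵢ negMulLog(λᵢ(c * cᴴ)) = ∑_μ negMulLog(λ_μ(cᴴ * c)), where the eigenvalues are those given by the spectral theorem for the Hermitian matrices c * cᴴ and cᴴ * c. (This is the statement S_A = S_B for a pure bipartite state.) -/
open Polynomial Matrix

/-! Auxiliary machinery for `pure_state_entropies_agree`. -/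

/-- The charpoly of a diagonal matrix. -/
lemma aux_charpoly_diagonal {R : Type*} [CommRing R] {n : Type*} [Fintype n] [DecidableEq n]
    (d : n → R) : (Matrix.diagonal d).charpoly = ∏ i, (X - C (d i)) := by
  have h : charmatrix (Matrix.diagonal d) = Matrix.diagonal (fun i => X - C (d i)) := by
    ext i j
    by_cases hij : i = j
    · subst hij; simp [charmatrix_apply_eq]
    · simp [charmatrix_apply_ne _ _ _ hij, Matrix.diagonal_apply_ne _ hij]
  rw [Matrix.charpoly, h, Matrix.det_diagonal]

/-- Charpoly is invariant under unitary conjugation. -/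
lemma aux_charpoly_unitary_conj {n : Type*} [Fintype n] [DecidableEq n]
    (U : Matrix.unitaryGroup n ℂ) (D : Matrix n n ℂ) :
    ((U : Matrix n n ℂ) * D * (star U : Matrix n n ℂ)).charpoly = D.charpoly := by
  set Um := (C : ℂ →+* ℂ[X]).mapMatrix (U : Matrix n n ℂ) with hUm
  set Vm := (C : ℂ →+* ℂ[X]).mapMatrix ((star U : Matrix n n ℂ)) with hVm
  have hUV : Um * Vm = 1 := by
    have : (U : Matrix n n ℂ) * (star U : Matrix n n ℂ) = 1 := U.2.2
    rw [hUm, hVm, ← _root_.map_mul, this, _root_.map_one]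
  have key : charmatrix ((U : Matrix n n ℂ) * D * (star U : Matrix n n ℂ))
      = Um * charmatrix D * Vm := by
    unfold charmatrix
    rw [Matrix.mul_sub, Matrix.sub_mul]
    congr 1
    · rw [scalar_apply, ← Matrix.smul_one_eq_diagonal, mul_smul_comm, Matrix.mul_one,
        Matrix.smul_mul, hUV]
    · simp [hUm, hVm]
  rw [Matrix.charpoly, key, det_mul, det_mul, mul_comm Um.det, mul_assoc, ← det_mul, hUV,
    Matrix.det_one, mul_one]
  rfl

/-- The fraction field of `ℂ[X]`. -/
noncomputable def AuxK : Type := FractionRing ℂ[X]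
noncomputable instance : Field AuxK := inferInstanceAs (Field (FractionRing ℂ[X]))
noncomputable instance : Algebra ℂ[X] AuxK := inferInstanceAs (Algebra ℂ[X] (FractionRing ℂ[X]))
instance : IsFractionRing ℂ[X] AuxK := inferInstanceAs (IsFractionRing ℂ[X] (FractionRing ℂ[X]))

lemma aux_charpoly_map_frac {p : ℕ} (M : Matrix (Fin p) (Fin p) ℂ) :
    algebraMap ℂ[X] AuxK M.charpoly
      = ((algebraMap ℂ[X] AuxK X) • (1 : Matrix (Fin p) (Fin p) AuxK)
          - M.map ((algebraMap ℂ[X] AuxK).comp C)).det := by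
  rw [Matrix.charpoly, RingHom.map_det]
  congr 1
  ext i j
  by_cases hij : i = j
  · subst hij
    simp [charmatrix_apply_eq, Matrix.smul_apply, Matrix.one_apply_eq, Algebra.smul_def,
      Matrix.algebraMap_matrix_apply]
  · simp [charmatrix_apply_ne _ _ _ hij, Matrix.one_apply_ne hij, Matrix.smul_apply,
      Algebra.smul_def, Matrix.algebraMap_matrix_apply, hij]

/-- The rectangular charpoly commutation identity:
`X ^ n * charpoly (A * B) = X ^ m * charpoly (B * A)`. -/
lemma aux_charpoly_mul_comm_rect (m n : ℕ) (A : Matrix (Fin m) (Fin n) ℂ)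
    (B : Matrix (Fin n) (Fin m) ℂ) :
    X ^ n * (A * B).charpoly = X ^ m * (B * A).charpoly := by
  apply IsFractionRing.injective ℂ[X] AuxK
  set g := algebraMap ℂ[X] AuxK
  set φ := g.comp (C : ℂ →+* ℂ[X]) with hφ
  set a := g X with ha
  have ha0 : a ≠ 0 := by
    simpa [ha] using (map_ne_zero_iff g (IsFractionRing.injective ℂ[X] AuxK)).2 X_ne_zero
  set A' := A.map φ
  set B' := B.map φ
  have hAB : (A * B).map (φ : ℂ → AuxK) = A' * B' := Matrix.map_mul
  have hBA : (B * A).map (φ : ℂ → AuxK) = B' * A' := Matrix.map_mul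
  have key : ∀ (p q : ℕ) (M : Matrix (Fin p) (Fin q) AuxK) (N : Matrix (Fin q) (Fin p) AuxK),
      (a • (1 : Matrix (Fin p) (Fin p) AuxK) - M * N).det
        = a ^ p * (1 - a⁻¹ • (M * N)).det := by
    intro p q M N
    have : a • ((1 : Matrix (Fin p) (Fin p) AuxK) - a⁻¹ • (M * N))
        = a • 1 - M * N := by
      rw [smul_sub, smul_smul, mul_inv_cancel₀ ha0, one_smul]
    rw [← this, Matrix.det_smul]
    simp
  have comm : (1 - a⁻¹ • (A' * B')).det = (1 - a⁻¹ • (B' * A')).det := by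
    have h1 : (1 : Matrix (Fin m) (Fin m) AuxK) - a⁻¹ • (A' * B')
        = 1 + ((-a⁻¹) • A') * B' := by
      rw [Matrix.smul_mul, neg_smul, sub_eq_add_neg]
    have h2 : (1 : Matrix (Fin n) (Fin n) AuxK) - a⁻¹ • (B' * A')
        = 1 + B' * ((-a⁻¹) • A') := by
      rw [Matrix.mul_smul, neg_smul, sub_eq_add_neg]
    rw [h1, h2, Matrix.det_one_add_mul_comm]
  rw [_root_.map_mul, _root_.map_mul, map_pow, map_pow, aux_charpoly_map_frac,
    aux_charpoly_map_frac, hAB, hBA, key, key, comm]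
  ring

/-- The charpoly of a Hermitian matrix is the product of `X - λᵢ`. -/
lemma aux_hermitian_charpoly {p : ℕ} {A : Matrix (Fin p) (Fin p) ℂ} (hA : A.IsHermitian) :
    A.charpoly = ∏ i, (X - C ((hA.eigenvalues i : ℂ))) := by
  conv_lhs => rw [hA.spectral_theorem]
  rw [Unitary.conjStarAlgAut_apply, aux_charpoly_unitary_conj, aux_charpoly_diagonal]
  rfl

/-- The roots of the charpoly of a Hermitian matrix are its eigenvalues. -/
lemma aux_hermitian_charpoly_roots {p : ℕ} {A : Matrix (Fin p) (Fin p) ℂ} (hA : A.IsHermitian) :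
    A.charpoly.roots = Multiset.map (fun i => ((hA.eigenvalues i : ℂ))) Finset.univ.val := by
  rw [aux_hermitian_charpoly hA, Finset.prod_eq_multiset_prod]
  have := roots_multiset_prod_X_sub_C
    (Multiset.map (fun i => ((hA.eigenvalues i : ℂ))) Finset.univ.val)
  rwa [Multiset.map_map] at this

/-- For a pure bipartite state, the entanglement entropies of the two reduced
density matrices agree: `S(c * cᴴ) = S(cᴴ * c)`. -/
theorem pure_state_entropies_agree
    (m n : ℕ) (c : Matrix (Fin m) (Fin n) ℂ) :
    (∑ i, Real.negMulLog
        ((Matrix.isHermitian_mul_conjTranspose_self c).eigenvalues i)) =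
      (∑ j, Real.negMulLog
        ((Matrix.isHermitian_conjTranspose_mul_self c).eigenvalues j)) := by
  set hA := Matrix.isHermitian_mul_conjTranspose_self c
  set hB := Matrix.isHermitian_conjTranspose_mul_self c
  have hpoly := aux_charpoly_mul_comm_rect m n c cᴴ
  have hroots : (n • ({0} : Multiset ℂ)) + Multiset.map (fun i => ((hA.eigenvalues i : ℂ)))
        Finset.univ.val
      = (m • ({0} : Multiset ℂ)) + Multiset.map (fun j => ((hB.eigenvalues j : ℂ)))
        Finset.univ.val := by
    have h1 : (X ^ n * (c * cᴴ).charpoly).roots = (X ^ m * (cᴴ * c).charpoly).roots := by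
      rw [hpoly]
    rwa [roots_mul (mul_ne_zero (pow_ne_zero _ X_ne_zero) (c * cᴴ).charpoly_monic.ne_zero),
      roots_mul (mul_ne_zero (pow_ne_zero _ X_ne_zero) (cᴴ * c).charpoly_monic.ne_zero),
      roots_pow, roots_pow, roots_X, aux_hermitian_charpoly_roots hA,
      aux_hermitian_charpoly_roots hB] at h1
  have key := congrArg (fun M : Multiset ℂ => (Multiset.map (fun z => Real.negMulLog z.re) M).sum)
    hroots
  simp only [Multiset.map_add, Multiset.sum_add, Multiset.map_nsmul, Multiset.map_singleton,
    Complex.zero_re, Real.negMulLog_zero, Multiset.nsmul_singleton, Multiset.sum_replicate,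
    smul_zero, zero_add, Multiset.map_map, Function.comp] at key
  rw [Finset.sum_eq_multiset_sum, Finset.sum_eq_multiset_sum]
  simpa using key
end

section
/- Subadditivity of von Neumann entropy: let ρ be a density matrix indexed by (Fin a × Fin b) × (Fin a × Fin b), i.e. ρ is Hermitian, positive semidefinite, and has trace 1. Let ρ_A be the partial trace of ρ over the second factor and ρ_B the partial trace over the first factor. Then S(ρ) ≤ S(ρ_A) + S(ρ_B). -/
open scoped Classical ComplexOrder
open Matrix Kronecker

/-- Von Neumann entropy of a (Hermitian) matrix: the sum of `negMulLog` of its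
eigenvalues, given by the spectral theorem. -/
noncomputable def vnEntropy {n : Type*} [Fintype n] [DecidableEq n]
    (ρ : Matrix n n ℂ) : ℝ :=
  if h : ρ.IsHermitian then ∑ i, Real.negMulLog (h.eigenvalues i) else 0

/-- Partial trace over the second tensor factor. -/
noncomputable def ptraceB {a b : ℕ}
    (ρ : Matrix (Fin a × Fin b) (Fin a × Fin b) ℂ) : Matrix (Fin a) (Fin a) ℂ :=
  Matrix.of fun i i' => ∑ μ : Fin b, ρ (i, μ) (i', μ)

/-- Partial trace over the first tensor factor. -/
noncomputable def ptraceA {a b : ℕ}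
    (ρ : Matrix (Fin a × Fin b) (Fin a × Fin b) ℂ) : Matrix (Fin b) (Fin b) ℂ :=
  Matrix.of fun j j' => ∑ i : Fin a, ρ (i, j) (i, j')

section Aux

lemma shannon_subadd {α β : Type*} [Fintype α] [Fintype β]
    {r : α → β → ℝ} (hr : ∀ i μ, 0 ≤ r i μ)
    (hsum : ∑ i, ∑ μ, r i μ = 1) :
    ∑ i, ∑ μ, Real.negMulLog (r i μ)
      ≤ ∑ i, Real.negMulLog (∑ μ, r i μ) + ∑ μ, Real.negMulLog (∑ i, r i μ) := by
  set p : α → ℝ := fun i => ∑ μ, r i μ with hp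
  set q : β → ℝ := fun μ => ∑ i, r i μ with hq
  have hp0 : ∀ i, 0 ≤ p i := fun i => Finset.sum_nonneg fun μ _ => hr i μ
  have hq0 : ∀ μ, 0 ≤ q μ := fun μ => Finset.sum_nonneg fun i _ => hr i μ
  have hple : ∀ i μ, r i μ ≤ p i := fun i μ =>
    Finset.single_le_sum (fun ν _ => hr i ν) (Finset.mem_univ μ)
  have hqle : ∀ i μ, r i μ ≤ q μ := fun i μ =>
    Finset.single_le_sum (fun j _ => hr j μ) (Finset.mem_univ i)
  have hpsum : ∑ i, p i = 1 := hsum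
  have hqsum : ∑ μ, q μ = 1 := by rw [← hsum, Finset.sum_comm]
  have key : ∀ i μ, Real.negMulLog (r i μ) ≤
      -(r i μ * Real.log (p i)) - r i μ * Real.log (q μ) + (p i * q μ - r i μ) := by
    intro i μ
    rcases eq_or_lt_of_le (hr i μ) with h0 | h0
    · rw [← h0]
      simp only [Real.negMulLog_zero, mul_zero, neg_zero, zero_sub, sub_zero, zero_mul, sub_zero,
        zero_add]
      have := mul_nonneg (hp0 i) (hq0 μ)
      linarith
    · have hpi : 0 < p i := lt_of_lt_of_le h0 (hple i μ)
      have hqi : 0 < q μ := lt_of_lt_of_le h0 (hqle i μ)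
      have ht : 0 < p i * q μ / r i μ := by positivity
      have hlog := Real.log_le_sub_one_of_pos ht
      rw [Real.log_div (by positivity) (ne_of_gt h0), Real.log_mul (ne_of_gt hpi) (ne_of_gt hqi)]
        at hlog
      have h2 := mul_le_mul_of_nonneg_left hlog (le_of_lt h0)
      have h3 : r i μ * (p i * q μ / r i μ - 1) = p i * q μ - r i μ := by
        field_simp
      rw [Real.negMulLog]
      nlinarith
  have step : ∑ i, ∑ μ, Real.negMulLog (r i μ) ≤
      ∑ i, ∑ μ, (-(r i μ * Real.log (p i)) - r i μ * Real.log (q μ) + (p i * q μ - r i μ)) :=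
    Finset.sum_le_sum fun i _ => Finset.sum_le_sum fun μ _ => key i μ
  refine step.trans_eq ?_
  have e1 : ∑ i, ∑ μ, -(r i μ * Real.log (p i)) = ∑ i, Real.negMulLog (p i) := by
    refine Finset.sum_congr rfl fun i _ => ?_
    rw [Real.negMulLog, neg_mul, Finset.sum_neg_distrib, ← Finset.sum_mul]
  have e2 : ∑ i, ∑ μ, -(r i μ * Real.log (q μ)) = ∑ μ, Real.negMulLog (q μ) := by
    rw [Finset.sum_comm]
    refine Finset.sum_congr rfl fun μ _ => ?_
    rw [Real.negMulLog, neg_mul, Finset.sum_neg_distrib, ← Finset.sum_mul]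
  have e3 : ∑ i, ∑ μ, (p i * q μ - r i μ) = 0 := by
    have : ∑ i, ∑ μ, p i * q μ = 1 := by
      simp only [← Finset.mul_sum, hqsum, mul_one, hpsum]
    simp only [Finset.sum_sub_distrib, this, hsum, sub_self]
    exact sub_eq_zero.mpr hsum.symm
  calc ∑ i, ∑ μ, (-(r i μ * Real.log (p i)) - r i μ * Real.log (q μ) + (p i * q μ - r i μ))
      = (∑ i, ∑ μ, -(r i μ * Real.log (p i))) + (∑ i, ∑ μ, -(r i μ * Real.log (q μ)))
        + (∑ i, ∑ μ, (p i * q μ - r i μ)) := by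
        simp only [← Finset.sum_add_distrib, sub_eq_add_neg]
    _ = ∑ i, Real.negMulLog (p i) + ∑ μ, Real.negMulLog (q μ) := by rw [e1, e2, e3]; ring

lemma entropy_le_pinched {n : Type*} [Fintype n] [DecidableEq n]
    {ρ : Matrix n n ℂ} (hpos : ρ.PosSemidef) {K : Matrix n n ℂ}
    (h1 : Kᴴ * K = 1) (h2 : K * Kᴴ = 1) :
    ∑ i, Real.negMulLog (hpos.1.eigenvalues i)
      ≤ ∑ k, Real.negMulLog (((Kᴴ * ρ * K) k k).re) := by
  set U : Matrix n n ℂ := (hpos.1.eigenvectorUnitary : Matrix n n ℂ) with hUdef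
  set lam := hpos.1.eigenvalues with hlam
  set Q : Matrix n n ℂ := Kᴴ * U with hQdef
  have hU1 : U * Uᴴ = 1 := by
    rw [← Matrix.star_eq_conjTranspose]
    exact Matrix.mem_unitaryGroup_iff.mp hpos.1.eigenvectorUnitary.2
  have hU2 : Uᴴ * U = 1 := by
    rw [← Matrix.star_eq_conjTranspose]
    exact Matrix.mem_unitaryGroup_iff'.mp hpos.1.eigenvectorUnitary.2
  have hQ1 : Q * Qᴴ = 1 := by
    rw [hQdef, conjTranspose_mul, conjTranspose_conjTranspose, Matrix.mul_assoc,
      ← Matrix.mul_assoc U, hU1, Matrix.one_mul, h1]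
  have hQ2 : Qᴴ * Q = 1 := by
    rw [hQdef, conjTranspose_mul, conjTranspose_conjTranspose, Matrix.mul_assoc,
      ← Matrix.mul_assoc K, h2, Matrix.one_mul, hU2]
  have hdiagM : Kᴴ * ρ * K = Q * diagonal (Complex.ofReal ∘ lam) * Qᴴ := by
    conv_lhs => rw [hpos.1.spectral_theorem, Unitary.conjStarAlgAut_apply]
    rw [hQdef, conjTranspose_mul, conjTranspose_conjTranspose, ← Matrix.star_eq_conjTranspose U]
    simp only [Matrix.mul_assoc]
    rfl
  have hdiag : ∀ k, ((Kᴴ * ρ * K) k k).re = ∑ j, Complex.normSq (Q k j) * lam j := by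
    intro k
    rw [hdiagM]
    have : (Q * diagonal (Complex.ofReal ∘ lam) * Qᴴ) k k
        = ((∑ j, Complex.normSq (Q k j) * lam j : ℝ) : ℂ) := by
      rw [Matrix.mul_apply]
      simp only [Matrix.mul_diagonal, Matrix.conjTranspose_apply, Function.comp_apply]
      push_cast
      refine Finset.sum_congr rfl fun j _ => ?_
      simp only [Complex.star_def]
      rw [← Complex.mul_conj]
      ring
    rw [this, Complex.ofReal_re]
  have hrow : ∀ k, ∑ j, Complex.normSq (Q k j) = 1 := by
    intro k
    have h : (Q * Qᴴ) k k = (1 : Matrix n n ℂ) k k := by rw [hQ1]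
    rw [Matrix.mul_apply] at h
    simp only [Matrix.conjTranspose_apply, Matrix.one_apply_eq, Complex.star_def,
      Complex.mul_conj] at h
    rw [← Complex.ofReal_sum] at h
    exact_mod_cast h
  have hcol : ∀ j, ∑ k, Complex.normSq (Q k j) = 1 := by
    intro j
    have h : (Qᴴ * Q) j j = (1 : Matrix n n ℂ) j j := by rw [hQ2]
    rw [Matrix.mul_apply] at h
    simp only [Matrix.conjTranspose_apply, Matrix.one_apply_eq, Complex.star_def] at h
    have h' : ∑ k, ((Complex.normSq (Q k j) : ℝ) : ℂ) = 1 := by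
      rw [← h]
      refine Finset.sum_congr rfl fun k _ => ?_
      rw [← Complex.mul_conj, mul_comm]
    rw [← Complex.ofReal_sum] at h'
    exact_mod_cast h'
  have hnn : ∀ i, 0 ≤ lam i := fun i => hpos.eigenvalues_nonneg i
  calc ∑ i, Real.negMulLog (lam i)
      = ∑ i, (∑ k, Complex.normSq (Q k i)) * Real.negMulLog (lam i) := by
        refine Finset.sum_congr rfl fun i _ => ?_
        rw [hcol i, one_mul]
    _ = ∑ k, ∑ i, Complex.normSq (Q k i) * Real.negMulLog (lam i) := by
        rw [Finset.sum_comm]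
        exact Finset.sum_congr rfl fun i _ => Finset.sum_mul _ _ _
    _ ≤ ∑ k, Real.negMulLog (∑ i, Complex.normSq (Q k i) * lam i) := by
        refine Finset.sum_le_sum fun k _ => ?_
        have := Real.concaveOn_negMulLog.le_map_sum
          (w := fun i => Complex.normSq (Q k i)) (p := lam) (t := Finset.univ)
          (fun i _ => Complex.normSq_nonneg _) (hrow k) (fun i _ => hnn i)
        simpa [smul_eq_mul] using this
    _ = ∑ k, Real.negMulLog (((Kᴴ * ρ * K) k k).re) := by
        refine Finset.sum_congr rfl fun k _ => ?_
        rw [hdiag k]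

lemma conj_expand {m n : Type*} [Fintype m] [Fintype n] (M : Matrix m m ℂ)
    (K : Matrix m n ℂ) (x y : n) :
    (Kᴴ * M * K) x y = ∑ u, ∑ v, star (K u x) * M u v * K v y := by
  simp only [Matrix.mul_apply, Matrix.conjTranspose_apply, Finset.sum_mul]
  rw [Finset.sum_comm]

lemma unit_delta {n : Type*} [Fintype n] [DecidableEq n] {W : Matrix n n ℂ}
    (hW : W * Wᴴ = 1) (ν ξ : n) :
    ∑ μ, star (W ν μ) * W ξ μ = if ν = ξ then 1 else 0 := by
  have h : (W * Wᴴ) ν ξ = (1 : Matrix n n ℂ) ν ξ := by rw [hW]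
  rw [Matrix.mul_apply] at h
  simp only [Matrix.conjTranspose_apply] at h
  have : ∑ μ, star (W ν μ) * W ξ μ = star ((1 : Matrix n n ℂ) ν ξ) := by
    rw [← h, star_sum]
    exact Finset.sum_congr rfl fun μ _ => by rw [star_mul', star_star]
  rw [this, Matrix.one_apply]
  split <;> simp

lemma ptraceB_conj {a b : ℕ} (ρ : Matrix (Fin a × Fin b) (Fin a × Fin b) ℂ)
    (V : Matrix (Fin a) (Fin a) ℂ) (W : Matrix (Fin b) (Fin b) ℂ) (hW : W * Wᴴ = 1) :
    ptraceB ((V ⊗ₖ W)ᴴ * ρ * (V ⊗ₖ W)) = Vᴴ * ptraceB ρ * V := by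
  ext i i'
  show ∑ μ, ((V ⊗ₖ W)ᴴ * ρ * (V ⊗ₖ W)) (i,μ) (i',μ) = _
  calc ∑ μ, ((V ⊗ₖ W)ᴴ * ρ * (V ⊗ₖ W)) (i,μ) (i',μ)
      = ∑ μ, ∑ u, ∑ v, star ((V ⊗ₖ W) u (i,μ)) * ρ u v * (V ⊗ₖ W) v (i',μ) :=
        Finset.sum_congr rfl fun μ _ => conj_expand ρ _ _ _
    _ = ∑ u, ∑ v, ∑ μ, star ((V ⊗ₖ W) u (i,μ)) * ρ u v * (V ⊗ₖ W) v (i',μ) := by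
        rw [Finset.sum_comm]
        exact Finset.sum_congr rfl fun u _ => Finset.sum_comm
    _ = ∑ u, ∑ v, (star (V u.1 i) * ρ u v * V v.1 i') * (if u.2 = v.2 then 1 else 0) := by
        refine Finset.sum_congr rfl fun u _ => Finset.sum_congr rfl fun v _ => ?_
        rw [← unit_delta hW u.2 v.2, Finset.mul_sum]
        refine Finset.sum_congr rfl fun μ _ => ?_
        simp only [Matrix.kroneckerMap_apply, star_mul']
        ring
    _ = ∑ u : Fin a × Fin b, ∑ k : Fin a, star (V u.1 i) * ρ u (k, u.2) * V k i' := by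
        refine Finset.sum_congr rfl fun u _ => ?_
        rw [Fintype.sum_prod_type]
        refine Finset.sum_congr rfl fun k _ => ?_
        simp only [mul_ite, mul_one, mul_zero]
        rw [Finset.sum_ite_eq Finset.univ u.2 (fun ξ => star (V u.1 i) * ρ u (k, ξ) * V k i')]
        simp
    _ = ∑ j, ∑ k, star (V j i) * (∑ ν, ρ (j,ν) (k,ν)) * V k i' := by
        rw [Fintype.sum_prod_type]
        refine Finset.sum_congr rfl fun j _ => ?_
        rw [Finset.sum_comm]
        refine Finset.sum_congr rfl fun k _ => ?_
        simp only [Finset.mul_sum, Finset.sum_mul]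
    _ = (Vᴴ * ptraceB ρ * V) i i' := by
        rw [conj_expand]
        exact Finset.sum_congr rfl fun j _ => Finset.sum_congr rfl fun k _ => by simp [ptraceB]

lemma ptraceA_conj {a b : ℕ} (ρ : Matrix (Fin a × Fin b) (Fin a × Fin b) ℂ)
    (V : Matrix (Fin a) (Fin a) ℂ) (W : Matrix (Fin b) (Fin b) ℂ) (hV : V * Vᴴ = 1) :
    ptraceA ((V ⊗ₖ W)ᴴ * ρ * (V ⊗ₖ W)) = Wᴴ * ptraceA ρ * W := by
  ext μ μ'
  show ∑ i, ((V ⊗ₖ W)ᴴ * ρ * (V ⊗ₖ W)) (i,μ) (i,μ') = _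
  calc ∑ i, ((V ⊗ₖ W)ᴴ * ρ * (V ⊗ₖ W)) (i,μ) (i,μ')
      = ∑ i, ∑ u, ∑ v, star ((V ⊗ₖ W) u (i,μ)) * ρ u v * (V ⊗ₖ W) v (i,μ') :=
        Finset.sum_congr rfl fun i _ => conj_expand ρ _ _ _
    _ = ∑ u, ∑ v, ∑ i, star ((V ⊗ₖ W) u (i,μ)) * ρ u v * (V ⊗ₖ W) v (i,μ') := by
        rw [Finset.sum_comm]
        exact Finset.sum_congr rfl fun u _ => Finset.sum_comm
    _ = ∑ u, ∑ v, (star (W u.2 μ) * ρ u v * W v.2 μ') * (if u.1 = v.1 then 1 else 0) := by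
        refine Finset.sum_congr rfl fun u _ => Finset.sum_congr rfl fun v _ => ?_
        rw [← unit_delta hV u.1 v.1, Finset.mul_sum]
        refine Finset.sum_congr rfl fun i _ => ?_
        simp only [Matrix.kroneckerMap_apply, star_mul']
        ring
    _ = ∑ u : Fin a × Fin b, ∑ ξ : Fin b, star (W u.2 μ) * ρ u (u.1, ξ) * W ξ μ' := by
        refine Finset.sum_congr rfl fun u _ => ?_
        rw [Fintype.sum_prod_type]
        simp only [mul_ite, mul_one, mul_zero]
        rw [show (∑ k : Fin a, ∑ ξ : Fin b, if u.1 = k then star (W u.2 μ) * ρ u (k, ξ) * W ξ μ' else 0)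
            = ∑ k : Fin a, if u.1 = k then ∑ ξ : Fin b, star (W u.2 μ) * ρ u (k, ξ) * W ξ μ' else 0 from
          Finset.sum_congr rfl fun k _ => by split <;> simp]
        rw [Finset.sum_ite_eq Finset.univ u.1
          (fun k => ∑ ξ, star (W u.2 μ) * ρ u (k, ξ) * W ξ μ')]
        simp
    _ = ∑ ν, ∑ ξ, star (W ν μ) * (∑ j, ρ (j,ν) (j,ξ)) * W ξ μ' := by
        rw [Fintype.sum_prod_type, Finset.sum_comm]
        refine Finset.sum_congr rfl fun ν _ => ?_
        rw [Finset.sum_comm]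
        refine Finset.sum_congr rfl fun ξ _ => ?_
        simp only [Finset.mul_sum, Finset.sum_mul]
    _ = (Wᴴ * ptraceA ρ * W) μ μ' := by
        rw [conj_expand]
        exact Finset.sum_congr rfl fun ν _ => Finset.sum_congr rfl fun ξ _ => by simp [ptraceA]

lemma posSemidef_sum {ι n : Type*} [Fintype n] (s : Finset ι) (f : ι → Matrix n n ℂ)
    (h : ∀ i ∈ s, (f i).PosSemidef) : (∑ i ∈ s, f i).PosSemidef := by
  induction s using Finset.cons_induction with
  | empty => simpa using Matrix.PosSemidef.zero
  | cons a s ha ih =>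
      rw [Finset.sum_cons]
      exact (h a (Finset.mem_cons_self a s)).add (ih fun i hi => h i (Finset.mem_cons_of_mem hi))

/-- The embedding `Fin b → Fin a × Fin b` at row `i`, as a matrix. -/
noncomputable def embB {a b : ℕ} (μ : Fin b) : Matrix (Fin a × Fin b) (Fin a) ℂ :=
  Matrix.of fun p i => if p = (i, μ) then 1 else 0

noncomputable def embA {a b : ℕ} (i : Fin a) : Matrix (Fin a × Fin b) (Fin b) ℂ :=
  Matrix.of fun p μ => if p = (i, μ) then 1 else 0

lemma ptraceB_eq_sum {a b : ℕ} (ρ : Matrix (Fin a × Fin b) (Fin a × Fin b) ℂ) :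
    ptraceB ρ = ∑ μ : Fin b, (embB (a := a) μ)ᴴ * ρ * (embB (a := a) μ) := by
  ext i i'
  rw [Matrix.sum_apply]
  show ∑ μ, ρ (i,μ) (i',μ) = _
  refine Finset.sum_congr rfl fun μ _ => ?_
  rw [conj_expand]
  simp [embB, Finset.sum_ite_eq', ite_mul, one_mul, zero_mul, apply_ite (star : ℂ → ℂ)]

lemma ptraceA_eq_sum {a b : ℕ} (ρ : Matrix (Fin a × Fin b) (Fin a × Fin b) ℂ) :
    ptraceA ρ = ∑ i : Fin a, (embA (b := b) i)ᴴ * ρ * (embA (b := b) i) := by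
  ext μ μ'
  rw [Matrix.sum_apply]
  show ∑ i, ρ (i,μ) (i,μ') = _
  refine Finset.sum_congr rfl fun i _ => ?_
  rw [conj_expand]
  simp [embA, Finset.sum_ite_eq', ite_mul, one_mul, zero_mul, apply_ite (star : ℂ → ℂ)]

lemma ptraceB_posSemidef {a b : ℕ} {ρ : Matrix (Fin a × Fin b) (Fin a × Fin b) ℂ}
    (hpos : ρ.PosSemidef) : (ptraceB ρ).PosSemidef := by
  rw [ptraceB_eq_sum]
  exact posSemidef_sum _ _ fun μ _ => hpos.conjTranspose_mul_mul_same _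

lemma ptraceA_posSemidef {a b : ℕ} {ρ : Matrix (Fin a × Fin b) (Fin a × Fin b) ℂ}
    (hpos : ρ.PosSemidef) : (ptraceA ρ).PosSemidef := by
  rw [ptraceA_eq_sum]
  exact posSemidef_sum _ _ fun i _ => hpos.conjTranspose_mul_mul_same _

lemma ptraceB_trace {a b : ℕ} (ρ : Matrix (Fin a × Fin b) (Fin a × Fin b) ℂ) :
    (ptraceB ρ).trace = ρ.trace := by
  simp [Matrix.trace, Matrix.diag, ptraceB, Fintype.sum_prod_type]

lemma ptraceA_trace {a b : ℕ} (ρ : Matrix (Fin a × Fin b) (Fin a × Fin b) ℂ) :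
    (ptraceA ρ).trace = ρ.trace := by
  rw [Matrix.trace, Matrix.trace]
  simp only [Matrix.diag, ptraceA, Matrix.of_apply, Fintype.sum_prod_type]
  rw [Finset.sum_comm]

end Aux

/-- Subadditivity of von Neumann entropy: `S(ρ) ≤ S(ρ_A) + S(ρ_B)`. -/
theorem vnEntropy_subadditivity {a b : ℕ}
    (ρ : Matrix (Fin a × Fin b) (Fin a × Fin b) ℂ)
    (hherm : ρ.IsHermitian) (hpos : ρ.PosSemidef) (htr : Matrix.trace ρ = 1) :
    vnEntropy ρ ≤ vnEntropy (ptraceB ρ) + vnEntropy (ptraceA ρ) := by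
  have hApos : (ptraceB ρ).PosSemidef := ptraceB_posSemidef hpos
  have hBpos : (ptraceA ρ).PosSemidef := ptraceA_posSemidef hpos
  have hAh : (ptraceB ρ).IsHermitian := hApos.1
  have hBh : (ptraceA ρ).IsHermitian := hBpos.1
  set p := hAh.eigenvalues with hpdef
  set q := hBh.eigenvalues with hqdef
  set V : Matrix (Fin a) (Fin a) ℂ := (hAh.eigenvectorUnitary : Matrix (Fin a) (Fin a) ℂ)
    with hVdef
  set W : Matrix (Fin b) (Fin b) ℂ := (hBh.eigenvectorUnitary : Matrix (Fin b) (Fin b) ℂ)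
    with hWdef
  have hV1 : V * Vᴴ = 1 := by
    rw [← Matrix.star_eq_conjTranspose]
    exact Matrix.mem_unitaryGroup_iff.mp hAh.eigenvectorUnitary.2
  have hV2 : Vᴴ * V = 1 := by
    rw [← Matrix.star_eq_conjTranspose]
    exact Matrix.mem_unitaryGroup_iff'.mp hAh.eigenvectorUnitary.2
  have hW1 : W * Wᴴ = 1 := by
    rw [← Matrix.star_eq_conjTranspose]
    exact Matrix.mem_unitaryGroup_iff.mp hBh.eigenvectorUnitary.2
  have hW2 : Wᴴ * W = 1 := by
    rw [← Matrix.star_eq_conjTranspose]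
    exact Matrix.mem_unitaryGroup_iff'.mp hBh.eigenvectorUnitary.2
  set K : Matrix (Fin a × Fin b) (Fin a × Fin b) ℂ := V ⊗ₖ W with hKdef
  have hKH : Kᴴ = Vᴴ ⊗ₖ Wᴴ := by
    ext u v
    simp [hKdef, Matrix.conjTranspose_apply, Matrix.kroneckerMap_apply, star_mul', mul_comm]
  have hK1 : Kᴴ * K = 1 := by
    rw [hKH, hKdef, ← Matrix.mul_kronecker_mul, hV2, hW2, Matrix.one_kronecker_one]
  have hK2 : K * Kᴴ = 1 := by
    rw [hKH, hKdef, ← Matrix.mul_kronecker_mul, hV1, hW1, Matrix.one_kronecker_one]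
  -- the pinched diagonal
  set M : Matrix (Fin a × Fin b) (Fin a × Fin b) ℂ := Kᴴ * ρ * K with hMdef
  have hMpos : M.PosSemidef := hpos.conjTranspose_mul_mul_same K
  set r : Fin a → Fin b → ℝ := fun i μ => (M (i,μ) (i,μ)).re with hrdef
  have hrnn : ∀ i μ, 0 ≤ r i μ := by
    intro i μ
    have := hMpos.dotProduct_mulVec_nonneg (Pi.single (i,μ) 1)
    rw [Complex.nonneg_iff] at this
    have h2 : star (Pi.single (i,μ) 1) ⬝ᵥ M *ᵥ Pi.single (i,μ) 1 = M (i,μ) (i,μ) := by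
      simp [Matrix.mulVec_single, dotProduct, Pi.single_apply, apply_ite (star : ℂ → ℂ)]
    rw [h2] at this
    exact this.1
  -- diagonal blocks: marginals
  have hdiagA : Vᴴ * ptraceB ρ * V = Matrix.diagonal (Complex.ofReal ∘ p) := by
    rw [hVdef, hpdef, ← Matrix.star_eq_conjTranspose]
    have := hAh.conjStarAlgAut_star_eigenvectorUnitary
    rw [Unitary.conjStarAlgAut_apply, Unitary.coe_star, star_star] at this
    exact this
  have hdiagB : Wᴴ * ptraceA ρ * W = Matrix.diagonal (Complex.ofReal ∘ q) := by
    rw [hWdef, hqdef, ← Matrix.star_eq_conjTranspose]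
    have := hBh.conjStarAlgAut_star_eigenvectorUnitary
    rw [Unitary.conjStarAlgAut_apply, Unitary.coe_star, star_star] at this
    exact this
  have hmargA : ∀ i, ∑ μ, r i μ = p i := by
    intro i
    have h1 : ptraceB M = Matrix.diagonal (Complex.ofReal ∘ p) := by
      rw [hMdef, hKdef, ptraceB_conj ρ V W hW1, hdiagA]
    have h2 : (∑ μ, M (i,μ) (i,μ)) = ((p i : ℝ) : ℂ) := by
      have := congrFun (congrFun h1 i) i
      simpa [ptraceB, Matrix.diagonal] using this
    have := congrArg Complex.re h2
    rw [Complex.re_sum] at this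
    simpa [hrdef] using this
  have hmargB : ∀ μ, ∑ i, r i μ = q μ := by
    intro μ
    have h1 : ptraceA M = Matrix.diagonal (Complex.ofReal ∘ q) := by
      rw [hMdef, hKdef, ptraceA_conj ρ V W hV1, hdiagB]
    have h2 : (∑ i, M (i,μ) (i,μ)) = ((q μ : ℝ) : ℂ) := by
      have := congrFun (congrFun h1 μ) μ
      simpa [ptraceA, Matrix.diagonal] using this
    have := congrArg Complex.re h2
    rw [Complex.re_sum] at this
    simpa [hrdef] using this
  -- trace of ρ_A equals 1, hence sum of p equals 1
  have hpsum : ∑ i, p i = 1 := by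
    have htrA : (ptraceB ρ).trace = 1 := by rw [ptraceB_trace, htr]
    have : (ptraceB ρ).trace = ∑ i, ((p i : ℝ) : ℂ) := by
      conv_lhs => rw [hAh.spectral_theorem, Unitary.conjStarAlgAut_apply]
      rw [Matrix.trace_mul_cycle]
      have h := Matrix.mem_unitaryGroup_iff'.mp hAh.eigenvectorUnitary.2
      rw [h, Matrix.one_mul, Matrix.trace_diagonal]
      rfl
    rw [this] at htrA
    rw [← Complex.ofReal_sum] at htrA
    exact_mod_cast htrA
  have hrsum : ∑ i, ∑ μ, r i μ = 1 := by
    rw [Finset.sum_congr rfl fun i _ => hmargA i, hpsum]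
  -- conclude
  rw [vnEntropy, dif_pos hherm, vnEntropy, dif_pos hAh, vnEntropy, dif_pos hBh]
  have step1 : ∑ i, Real.negMulLog (hherm.eigenvalues i)
      ≤ ∑ k : Fin a × Fin b, Real.negMulLog ((M k k).re) := by
    have := entropy_le_pinched hpos hK1 hK2
    convert this using 2
  have step2 : ∑ k : Fin a × Fin b, Real.negMulLog ((M k k).re)
      = ∑ i, ∑ μ, Real.negMulLog (r i μ) := by
    rw [Fintype.sum_prod_type]
  have step3 := shannon_subadd hrnn hrsum
  rw [step2] at step1
  refine step1.trans (step3.trans_eq ?_)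
  congr 1
  · exact Finset.sum_congr rfl fun i _ => by rw [hmargA i]
  · exact Finset.sum_congr rfl fun μ _ => by rw [hmargB μ]
end

section
/- The monogamy of mutual information fails for general quantum states: let ρ be the density matrix indexed by (Fin 2 × Fin 2 × Fin 2) × (Fin 2 × Fin 2 × Fin 2) defined by ρ(x,y) = 1/2 if x = y and x ∈ {(0,0,0), (1,1,1)}, and ρ(x,y) = 0 otherwise (i.e. ρ = ½(|000⟩⟨000| + |111⟩⟨111|)). Then, with ρ_{AB}, ρ_{BC}, ρ_{CA} the two-party partial traces and ρ_A, ρ_B, ρ_C the one-party partial traces, one has S(ρ_{AB}) + S(ρ_{BC}) + S(ρ_{CA}) = 3·log 2 and S(ρ_A) + S(ρ_B) + S(ρ_C) + S(ρ) = 4·log 2; in particular S(ρ_{AB}) + S(ρ_{BC}) + S(ρ_{CA}) < S(ρ_A) + S(ρ_B) + S(ρ_C) + S(ρ), so the monogamy inequality S_{A∪B} + S_{B∪C} + S_{C∪A} ≥ S_A + S_B + S_C + S_{A∪B∪C} is violated. -/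
open scoped Classical ComplexOrder

/-- Partial trace over the third tensor factor: `ρ_{AB}`. -/
noncomputable def rhoAB {a b c : ℕ}
    (ρ : Matrix (Fin a × Fin b × Fin c) (Fin a × Fin b × Fin c) ℂ) :
    Matrix (Fin a × Fin b) (Fin a × Fin b) ℂ :=
  Matrix.of fun p q => ∑ k : Fin c, ρ (p.1, p.2, k) (q.1, q.2, k)

/-- Partial trace over the first tensor factor: `ρ_{BC}`. -/
noncomputable def rhoBC {a b c : ℕ}
    (ρ : Matrix (Fin a × Fin b × Fin c) (Fin a × Fin b × Fin c) ℂ) :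
    Matrix (Fin b × Fin c) (Fin b × Fin c) ℂ :=
  Matrix.of fun p q => ∑ i : Fin a, ρ (i, p) (i, q)

/-- Partial trace over the second tensor factor: `ρ_{CA}` (indexed by `A × C`). -/
noncomputable def rhoCA {a b c : ℕ}
    (ρ : Matrix (Fin a × Fin b × Fin c) (Fin a × Fin b × Fin c) ℂ) :
    Matrix (Fin a × Fin c) (Fin a × Fin c) ℂ :=
  Matrix.of fun p q => ∑ j : Fin b, ρ (p.1, j, p.2) (q.1, j, q.2)

/-- Partial trace over the second and third tensor factors: `ρ_A`. -/
noncomputable def rhoA {a b c : ℕ}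
    (ρ : Matrix (Fin a × Fin b × Fin c) (Fin a × Fin b × Fin c) ℂ) :
    Matrix (Fin a) (Fin a) ℂ :=
  Matrix.of fun i i' => ∑ j : Fin b, ∑ k : Fin c, ρ (i, j, k) (i', j, k)

/-- Partial trace over the first and third tensor factors: `ρ_B`. -/
noncomputable def rhoB {a b c : ℕ}
    (ρ : Matrix (Fin a × Fin b × Fin c) (Fin a × Fin b × Fin c) ℂ) :
    Matrix (Fin b) (Fin b) ℂ :=
  Matrix.of fun j j' => ∑ i : Fin a, ∑ k : Fin c, ρ (i, j, k) (i, j', k)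

/-- Partial trace over the first and second tensor factors: `ρ_C`. -/
noncomputable def rhoC {a b c : ℕ}
    (ρ : Matrix (Fin a × Fin b × Fin c) (Fin a × Fin b × Fin c) ℂ) :
    Matrix (Fin c) (Fin c) ℂ :=
  Matrix.of fun k k' => ∑ i : Fin a, ∑ j : Fin b, ρ (i, j, k) (i, j, k')

/-- The classical three-qubit state `½(|000⟩⟨000| + |111⟩⟨111|)`. -/
noncomputable def ρGHZdiag :
    Matrix (Fin 2 × Fin 2 × Fin 2) (Fin 2 × Fin 2 × Fin 2) ℂ :=
  Matrix.of fun x y =>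
    if x = y ∧ (x = (0, 0, 0) ∨ x = (1, 1, 1)) then (1 / 2 : ℂ) else 0


lemma vn_key {n : Type*} [Fintype n] [DecidableEq n] (ρ : Matrix n n ℂ)
    (hH : ρ.IsHermitian) (hsq : ρ * ρ = (1/2 : ℂ) • ρ) (htr : ρ.trace = 1) :
    vnEntropy ρ = Real.log 2 := by
  have key : ∀ i, hH.eigenvalues i = 0 ∨ hH.eigenvalues i = 1/2 := by
    intro i
    have hv := hH.mulVec_eigenvectorBasis i
    have hnz := hH.eigenvectorBasis.orthonormal.ne_zero i
    set μ : ℝ := hH.eigenvalues i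
    have h2 : ρ.mulVec (ρ.mulVec ⇑(hH.eigenvectorBasis i)) = ((μ:ℂ)*(μ:ℂ)) • ⇑(hH.eigenvectorBasis i) := by
      rw [hv, Matrix.mulVec_smul, hv, smul_smul]
      norm_cast
    rw [Matrix.mulVec_mulVec, hsq, Matrix.smul_mulVec, hv] at h2
    obtain ⟨x, hx⟩ : ∃ x, (hH.eigenvectorBasis i) x ≠ 0 := by
      by_contra h
      push_neg at h
      exact hnz (by ext x; exact h x)
    have h3 := congrFun h2 x
    simp only [Pi.smul_apply, smul_eq_mul, Complex.real_smul] at h3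
    have hx' : (WithLp.equiv 2 (n → ℂ)) (hH.eigenvectorBasis i) x ≠ 0 := hx
    have hμ : ((μ:ℂ)*(μ:ℂ)) = (1/2 : ℂ) * μ := by
      have h4 : ((μ:ℂ)*(μ:ℂ)) * (WithLp.equiv 2 (n → ℂ)) (hH.eigenvectorBasis i) x
          = ((1/2 : ℂ) * μ) * (WithLp.equiv 2 (n → ℂ)) (hH.eigenvectorBasis i) x := by
        exact (by linear_combination -h3 : ((μ:ℂ)*(μ:ℂ)) * (hH.eigenvectorBasis i).ofLp x = ((1/2 : ℂ) * μ) * (hH.eigenvectorBasis i).ofLp x)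
      exact mul_right_cancel₀ hx' h4
    have hr : μ * μ = 1/2 * μ := Complex.ofReal_injective (by push_cast; linear_combination hμ)
    have : (μ - 0) * (μ - 1/2) = 0 := by ring_nf; linarith [hr]
    rcases mul_eq_zero.mp this with h | h
    · left; linarith
    · right; linarith
  have hsum : ∑ i, hH.eigenvalues i = 1 := by
    have := hH.spectral_theorem
    have ht : ρ.trace = ∑ i, (hH.eigenvalues i : ℂ) := by
      conv_lhs => rw [this]
      rw [Unitary.conjStarAlgAut_apply, Matrix.trace_mul_cycle]
      simp [Matrix.trace_diagonal, Matrix.mul_assoc,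
        (Matrix.mem_unitaryGroup_iff').mp (hH.eigenvectorUnitary).2]
    rw [htr] at ht
    exact_mod_cast ht.symm
  rw [vnEntropy, dif_pos hH]
  have : ∀ i, Real.negMulLog (hH.eigenvalues i) = hH.eigenvalues i * Real.log 2 := by
    intro i
    rcases key i with h | h <;> rw [h]
    · simp [Real.negMulLog]
    · rw [Real.negMulLog]
      rw [show Real.log (1/2) = - Real.log 2 by simp [Real.log_div]]
      ring
  rw [Finset.sum_congr rfl (fun i _ => this i), ← Finset.sum_mul, hsum, one_mul]

lemma diag_entropy {n : Type*} [Fintype n] [DecidableEq n] (d : n → ℂ)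
    (hd : ∀ x, d x = 0 ∨ d x = 1/2) (hs : ∑ x, d x = 1) :
    vnEntropy (Matrix.diagonal d) = Real.log 2 := by
  apply vn_key
  · rw [Matrix.IsHermitian, Matrix.diagonal_conjTranspose]
    have : star d = d := by
      funext x
      rcases hd x with h | h <;> simp [h]
    rw [this]
  · rw [Matrix.diagonal_mul_diagonal, ← Matrix.diagonal_smul]
    have : (fun i => d i * d i) = (1/2 : ℂ) • d := by
      funext x
      rcases hd x with h | h <;> simp [h] <;> norm_num
    rw [this]
  · simpa [Matrix.trace_diagonal] using hs

noncomputable def d1 : Fin 2 → ℂ := fun _ => 1/2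
noncomputable def d2 : (Fin 2 × Fin 2) → ℂ :=
  fun p => if p = (0,0) ∨ p = (1,1) then 1/2 else 0
noncomputable def d3 : (Fin 2 × Fin 2 × Fin 2) → ℂ :=
  fun x => if x = (0,0,0) ∨ x = (1,1,1) then 1/2 else 0

lemma hd1 : ∀ x, d1 x = 0 ∨ d1 x = 1/2 := fun x => Or.inr rfl
lemma hd2 : ∀ x, d2 x = 0 ∨ d2 x = 1/2 := by
  intro x; unfold d2; split <;> simp
lemma hd3 : ∀ x, d3 x = 0 ∨ d3 x = 1/2 := by
  intro x; unfold d3; split <;> simp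
lemma hs1 : ∑ x, d1 x = 1 := by simp [d1, Fin.sum_univ_two]
lemma hs2 : ∑ x, d2 x = 1 := by
  simp [d2, Fintype.sum_prod_type, Fin.sum_univ_two, Prod.ext_iff]; norm_num
lemma hs3 : ∑ x, d3 x = 1 := by
  simp [d3, Fintype.sum_prod_type, Fin.sum_univ_two, Prod.ext_iff]; norm_num

lemma hGHZ : ρGHZdiag = Matrix.diagonal d3 := by
  ext x y
  by_cases h : x = y <;>
    simp [ρGHZdiag, d3, Matrix.diagonal, h]

lemma hAB : rhoAB ρGHZdiag = Matrix.diagonal d2 := by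
  ext ⟨i,j⟩ ⟨i',j'⟩
  fin_cases i <;> fin_cases j <;> fin_cases i' <;> fin_cases j' <;>
    simp [rhoAB, ρGHZdiag, d2, Fin.sum_univ_two, Matrix.diagonal, Prod.ext_iff]

lemma hBC : rhoBC ρGHZdiag = Matrix.diagonal d2 := by
  ext ⟨i,j⟩ ⟨i',j'⟩
  fin_cases i <;> fin_cases j <;> fin_cases i' <;> fin_cases j' <;>
    simp [rhoBC, ρGHZdiag, d2, Fin.sum_univ_two, Matrix.diagonal, Prod.ext_iff]

lemma hCA : rhoCA ρGHZdiag = Matrix.diagonal d2 := by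
  ext ⟨i,j⟩ ⟨i',j'⟩
  fin_cases i <;> fin_cases j <;> fin_cases i' <;> fin_cases j' <;>
    simp [rhoCA, ρGHZdiag, d2, Fin.sum_univ_two, Matrix.diagonal, Prod.ext_iff]

lemma hA : rhoA ρGHZdiag = Matrix.diagonal d1 := by
  ext i i'
  fin_cases i <;> fin_cases i' <;>
    simp [rhoA, ρGHZdiag, d1, Fin.sum_univ_two, Matrix.diagonal, Prod.ext_iff] <;> norm_num

lemma hB : rhoB ρGHZdiag = Matrix.diagonal d1 := by
  ext i i'
  fin_cases i <;> fin_cases i' <;>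
    simp [rhoB, ρGHZdiag, d1, Fin.sum_univ_two, Matrix.diagonal, Prod.ext_iff] <;> norm_num

lemma hC : rhoC ρGHZdiag = Matrix.diagonal d1 := by
  ext i i'
  fin_cases i <;> fin_cases i' <;>
    simp [rhoC, ρGHZdiag, d1, Fin.sum_univ_two, Matrix.diagonal, Prod.ext_iff] <;> norm_num

/-- The monogamy of mutual information fails for general quantum states:
for `ρ = ½(|000⟩⟨000| + |111⟩⟨111|)` one has
`S_{AB} + S_{BC} + S_{CA} = 3 log 2 < 4 log 2 = S_A + S_B + S_C + S_{ABC}`. -/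
theorem monogamy_of_mutual_information_fails :
    vnEntropy (rhoAB ρGHZdiag) + vnEntropy (rhoBC ρGHZdiag)
        + vnEntropy (rhoCA ρGHZdiag) = 3 * Real.log 2 ∧
    vnEntropy (rhoA ρGHZdiag) + vnEntropy (rhoB ρGHZdiag)
        + vnEntropy (rhoC ρGHZdiag) + vnEntropy ρGHZdiag = 4 * Real.log 2 ∧
    vnEntropy (rhoAB ρGHZdiag) + vnEntropy (rhoBC ρGHZdiag)
        + vnEntropy (rhoCA ρGHZdiag)
      < vnEntropy (rhoA ρGHZdiag) + vnEntropy (rhoB ρGHZdiag)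
        + vnEntropy (rhoC ρGHZdiag) + vnEntropy ρGHZdiag := by
  have e1 : vnEntropy (rhoAB ρGHZdiag) = Real.log 2 := by rw [hAB]; exact diag_entropy d2 hd2 hs2
  have e2 : vnEntropy (rhoBC ρGHZdiag) = Real.log 2 := by rw [hBC]; exact diag_entropy d2 hd2 hs2
  have e3 : vnEntropy (rhoCA ρGHZdiag) = Real.log 2 := by rw [hCA]; exact diag_entropy d2 hd2 hs2
  have e4 : vnEntropy (rhoA ρGHZdiag) = Real.log 2 := by rw [hA]; exact diag_entropy d1 hd1 hs1
  have e5 : vnEntropy (rhoB ρGHZdiag) = Real.log 2 := by rw [hB]; exact diag_entropy d1 hd1 hs1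
  have e6 : vnEntropy (rhoC ρGHZdiag) = Real.log 2 := by rw [hC]; exact diag_entropy d1 hd1 hs1
  have e7 : vnEntropy ρGHZdiag = Real.log 2 := by rw [hGHZ]; exact diag_entropy d3 hd3 hs3
  have hlog : 0 < Real.log 2 := Real.log_pos (by norm_num)
  refine ⟨by rw [e1, e2, e3]; ring, by rw [e4, e5, e6, e7]; ring, ?_⟩
  rw [e1, e2, e3, e4, e5, e6, e7]
  linarith
end

section
/- The Rényi entropy is nonincreasing in the order: for a finite probability distribution p : Fin N → ℝ (pᵢ ≥ 0, ∑ᵢ pᵢ = 1) and real numbers s, t with 0 < s ≤ t, s ≠ 1 and t ≠ 1, one has (1 − t)⁻¹ · log(∑ᵢ pᵢᵗ) ≤ (1 − s)⁻¹ · log(∑ᵢ pᵢˢ), i.e. S_t(p) ≤ S_s(p). -/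
private lemma renyi_sum_pos {N : ℕ} (p : Fin N → ℝ)
    (hp : ∀ i, 0 ≤ p i) (hsum : ∑ i, p i = 1) {r : ℝ} (hr : 0 < r) :
    0 < ∑ i, p i ^ r := by
  obtain ⟨j, hj⟩ : ∃ j, 0 < p j := by
    by_contra h
    push_neg at h
    have : ∑ i, p i = 0 := Finset.sum_eq_zero fun i _ => le_antisymm (h i) (hp i)
    simp [this] at hsum
  refine Finset.sum_pos' (fun i _ => Real.rpow_nonneg (hp i) r) ⟨j, Finset.mem_univ j, ?_⟩
  exact Real.rpow_pos_of_pos hj r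

private lemma renyi_convex {N : ℕ} (p : Fin N → ℝ)
    (hp : ∀ i, 0 ≤ p i) (hsum : ∑ i, p i = 1) :
    ConvexOn ℝ (Set.Ioi (0:ℝ)) (fun r : ℝ => Real.log (∑ i, p i ^ r)) := by
  refine ⟨convex_Ioi 0, fun a ha b hb μ ν hμ hν hμν => ?_⟩
  rcases eq_or_lt_of_le hμ with hμ0 | hμ0
  · simp [← hμ0] at hμν ⊢; simp [hμν]
  rcases eq_or_lt_of_le hν with hν0 | hν0
  · simp [← hν0] at hμν ⊢; simp [hμν]
  have ha' : (0:ℝ) < a := ha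
  have hb' : (0:ℝ) < b := hb
  have hFa := renyi_sum_pos p hp hsum ha'
  have hFb := renyi_sum_pos p hp hsum hb'
  have key : ∑ i, p i ^ (μ * a + ν * b) ≤ (∑ i, p i ^ a) ^ μ * (∑ i, p i ^ b) ^ ν := by
    have hconj : Real.HolderConjugate μ⁻¹ ν⁻¹ := by
      rw [Real.holderConjugate_iff]; constructor
      · rw [lt_inv_comm₀ one_pos hμ0]; linarith
      · simp only [inv_inv]; linarith
    have H := Real.inner_le_Lp_mul_Lq_of_nonneg (f := fun i => p i ^ (a * μ))
      (g := fun i => p i ^ (b * ν)) (s := Finset.univ) hconj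
      (fun i _ => Real.rpow_nonneg (hp i) _) (fun i _ => Real.rpow_nonneg (hp i) _)
    have e1 : ∀ i : Fin N, p i ^ (a * μ) * p i ^ (b * ν) = p i ^ (μ * a + ν * b) := by
      intro i
      rw [← Real.rpow_add' (hp i) (by ring_nf; positivity)]
      ring_nf
    have e2 : ∀ i : Fin N, (p i ^ (a * μ)) ^ μ⁻¹ = p i ^ a := by
      intro i
      rw [← Real.rpow_mul (hp i), mul_assoc, mul_inv_cancel₀ hμ0.ne', mul_one]
    have e3 : ∀ i : Fin N, (p i ^ (b * ν)) ^ ν⁻¹ = p i ^ b := by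
      intro i
      rw [← Real.rpow_mul (hp i), mul_assoc, mul_inv_cancel₀ hν0.ne', mul_one]
    simp only [e1, e2, e3, one_div, inv_inv] at H
    exact H
  calc Real.log (∑ i, p i ^ (μ * a + ν * b))
      ≤ Real.log ((∑ i, p i ^ a) ^ μ * (∑ i, p i ^ b) ^ ν) := by
        apply Real.log_le_log _ key
        exact renyi_sum_pos p hp hsum (by positivity)
    _ = μ * Real.log (∑ i, p i ^ a) + ν * Real.log (∑ i, p i ^ b) := by
        rw [Real.log_mul (by positivity) (by positivity), Real.log_rpow hFa, Real.log_rpow hFb]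

/-- The Rényi entropy is nonincreasing in the order: for `0 < s ≤ t`, `s ≠ 1 ≠ t`,
`S_t(p) ≤ S_s(p)` where `S_t(p) = (1−t)⁻¹ log ∑ᵢ pᵢᵗ`. -/
theorem renyi_entropy_antitone {N : ℕ} (p : Fin N → ℝ)
    (hp : ∀ i, 0 ≤ p i) (hsum : ∑ i, p i = 1)
    (s t : ℝ) (hs : 0 < s) (hst : s ≤ t) (hs1 : s ≠ 1) (ht1 : t ≠ 1) :
    (1 - t)⁻¹ * Real.log (∑ i, p i ^ t)
      ≤ (1 - s)⁻¹ * Real.log (∑ i, p i ^ s) := by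
  have ht : 0 < t := lt_of_lt_of_le hs hst
  have hcv := renyi_convex p hp hsum
  have hsec := hcv.secant_mono (a := 1) (x := s) (y := t)
    (Set.mem_Ioi.2 one_pos) (Set.mem_Ioi.2 hs) (Set.mem_Ioi.2 ht) hs1 ht1 hst
  have h1 : Real.log (∑ i, p i ^ (1:ℝ)) = 0 := by
    simp only [Real.rpow_one, hsum, Real.log_one]
  simp only [h1, sub_zero] at hsec
  have e : ∀ r : ℝ, Real.log (∑ i, p i ^ r) / (r - 1)
      = -((1 - r)⁻¹ * Real.log (∑ i, p i ^ r)) := by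
    intro r
    rw [div_eq_mul_inv, ← neg_neg (r - 1), neg_sub, inv_neg]
    ring
  rw [e s, e t] at hsec
  linarith
end

section
/- Nonnegativity of the modular entropy: for p : Fin N → ℝ with 0 < pᵢ for all i and ∑ᵢ pᵢ = 1, and any t > 0, one has log(∑ᵢ pᵢᵗ) − t · (∑ᵢ pᵢᵗ · log pᵢ) / (∑ᵢ pᵢᵗ) ≥ 0. (This is the statement S̃(t) = (1 − t·∂_t) log Z(t) ≥ 0 for the partition function Z(t) = ∑ᵢ pᵢᵗ, equivalent to the Rényi inequality ∂ₙ[((n−1)/n)Sₙ] ≥ 0.) -/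
/-- Nonnegativity of the modular entropy `S̃(t) = (1 − t∂_t) log Z(t) ≥ 0` for the
partition function `Z(t) = ∑ᵢ pᵢᵗ` of a probability distribution with strictly
positive weights. -/
theorem modular_entropy_nonneg {N : ℕ} (p : Fin N → ℝ)
    (hp : ∀ i, 0 < p i) (hsum : ∑ i, p i = 1)
    (t : ℝ) (ht : 0 < t) :
    0 ≤ Real.log (∑ i, p i ^ t)
        - t * ((∑ i, p i ^ t * Real.log (p i)) / (∑ i, p i ^ t)) := by
  have hN : Nonempty (Fin N) := by
    rcases Nat.eq_zero_or_pos N with h | h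
    · subst h; simp at hsum
    · exact ⟨⟨0, h⟩⟩
  have hpt : ∀ i, 0 < p i ^ t := fun i => Real.rpow_pos_of_pos (hp i) t
  set Z := ∑ i, p i ^ t with hZ
  have hZpos : 0 < Z :=
    Finset.sum_pos (fun i _ => hpt i) Finset.univ_nonempty
  have hle : ∀ i, p i ^ t ≤ Z := fun i =>
    Finset.single_le_sum (fun j _ => (hpt j).le) (Finset.mem_univ i)
  have key : t * (∑ i, p i ^ t * Real.log (p i)) ≤ Z * Real.log Z := by
    rw [Finset.mul_sum]
    calc ∑ i, t * (p i ^ t * Real.log (p i))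
        = ∑ i, p i ^ t * Real.log (p i ^ t) := by
          refine Finset.sum_congr rfl fun i _ => ?_
          rw [Real.log_rpow (hp i)]; ring
      _ ≤ ∑ i, p i ^ t * Real.log Z := by
          refine Finset.sum_le_sum fun i _ => ?_
          exact mul_le_mul_of_nonneg_left (Real.log_le_log (hpt i) (hle i)) (hpt i).le
      _ = Z * Real.log Z := by rw [← Finset.sum_mul, mul_comm]
  have h2 : t * ((∑ i, p i ^ t * Real.log (p i)) / Z) ≤ Real.log Z := by
    rw [mul_div_assoc', div_le_iff₀ hZpos]
    linarith [key]
  linarith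
end

section
/- The modular entropy equals the Shannon entropy of the escort distribution: for p : Fin N → ℝ with 0 < pᵢ for all i and ∑ᵢ pᵢ = 1, and any t > 0, define the escort distribution qᵢ = pᵢᵗ / (∑ⱼ pⱼᵗ). Then t² · deriv (fun u => −u⁻¹ · log(∑ᵢ pᵢᵘ)) t = ∑ᵢ negMulLog(qᵢ). (Since ((u−1)/u)·S_u(p) = −u⁻¹·log(∑ᵢ pᵢᵘ), this is the identity S̃ₙ = n²·∂ₙ(((n−1)/n)·Sₙ) expressing the modular entropy in terms of the Rényi entropy.) -/
/-- The modular entropy `S̃ₙ = n² ∂ₙ(((n−1)/n)·Sₙ)` equals the Shannon entropy of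
the escort distribution `qᵢ = pᵢᵗ / ∑ⱼ pⱼᵗ`. -/
theorem modular_entropy_eq_escort_shannon {N : ℕ} (p : Fin N → ℝ)
    (hp : ∀ i, 0 < p i) (hsum : ∑ i, p i = 1)
    (t : ℝ) (ht : 0 < t) :
    t ^ 2 * deriv (fun u : ℝ => -u⁻¹ * Real.log (∑ i, p i ^ u)) t
      = ∑ i, Real.negMulLog (p i ^ t / ∑ j, p j ^ t) := by
  rcases Nat.eq_zero_or_pos N with hN | hN
  · subst hN; simp at hsum
  have hne : Nonempty (Fin N) := ⟨⟨0, hN⟩⟩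
  set Z : ℝ := ∑ i, p i ^ t with hZdef
  have hZt : 0 < Z :=
    Finset.sum_pos (fun i _ => Real.rpow_pos_of_pos (hp i) t) Finset.univ_nonempty
  set S : ℝ := ∑ i, p i ^ t * Real.log (p i) with hSdef
  have hZderiv : HasDerivAt (fun u : ℝ => ∑ i, p i ^ u) S t := by
    rw [hSdef]
    exact HasDerivAt.fun_sum (fun i _ => (Real.hasStrictDerivAt_const_rpow (hp i) t).hasDerivAt)
  have hf : HasDerivAt (fun u : ℝ => -u⁻¹ * Real.log (∑ i, p i ^ u))
      (-(-(t ^ 2)⁻¹) * Real.log Z + -t⁻¹ * (S / Z)) t :=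
    ((hasDerivAt_inv ht.ne').neg).mul (hZderiv.log hZt.ne')
  rw [hf.deriv]
  have hterm : ∀ i : Fin N, Real.negMulLog (p i ^ t / Z)
      = Real.log Z * (p i ^ t / Z) - t * (p i ^ t * Real.log (p i)) / Z := by
    intro i
    rw [Real.negMulLog, Real.log_div (Real.rpow_pos_of_pos (hp i) t).ne' hZt.ne',
      Real.log_rpow (hp i)]
    field_simp
    ring
  rw [Finset.sum_congr rfl (fun i _ => hterm i), Finset.sum_sub_distrib,
    ← Finset.mul_sum, ← Finset.sum_div, ← Finset.sum_div, ← Finset.mul_sum,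
    ← hSdef, ← hZdef, div_self hZt.ne']
  field_simp
  ring
end

section
/- The reduced density matrix of one of two coupled harmonic oscillators is a Gaussian kernel: let ω₊, ω₋ > 0, set β = (ω₊ − ω₋)²/(4(ω₊ + ω₋)) and γ = 2ω₊ω₋/(ω₊ + ω₋) + β, and let Ψ : ℝ → ℝ → ℝ be the ground-state wave function Ψ(x,y) = ((ω₊·ω₋)^(1/4)/√π) · exp(−(ω₊·(x+y)² + ω₋·(x−y)²)/4). Then for all real x, x′: ∫_{y ∈ ℝ} Ψ(x,y)·Ψ(x′,y) dy = √((γ−β)/π) · exp(−(γ/2)·(x² + x′²) + β·x·x′). -/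
open MeasureTheory

lemma gauss_complete_square (a b : ℝ) (ha : 0 < a) :
    (∫ y : ℝ, Real.exp (-a * y ^ 2 + b * y))
      = Real.sqrt (Real.pi / a) * Real.exp (b ^ 2 / (4 * a)) := by
  have key : ∀ y : ℝ, Real.exp (-a * y ^ 2 + b * y)
      = Real.exp (b ^ 2 / (4 * a)) * Real.exp (-a * (y - b / (2 * a)) ^ 2) := by
    intro y
    rw [← Real.exp_add]
    congr 1
    field_simp
    ring
  simp_rw [key]
  rw [integral_const_mul,
    integral_sub_right_eq_self (fun y => Real.exp (-a * y ^ 2)) (b / (2 * a)),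
    integral_gaussian]
  ring

/-- The reduced density matrix of one of two coupled harmonic oscillators is a
Gaussian (Mehler) kernel: `ρ_A(x,x′) = ∫ Ψ(x,y)Ψ(x′,y) dy
= √((γ−β)/π) · exp(−(γ/2)(x² + x′²) + β·x·x′)`. -/
theorem reduced_density_matrix_gaussian
    (ωp ωm : ℝ) (hωp : 0 < ωp) (hωm : 0 < ωm)
    (β γ : ℝ)
    (hβ : β = (ωp - ωm) ^ 2 / (4 * (ωp + ωm)))
    (hγ : γ = 2 * ωp * ωm / (ωp + ωm) + β)
    (Ψ : ℝ → ℝ → ℝ)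
    (hΨ : ∀ x y, Ψ x y = ((ωp * ωm) ^ ((1 : ℝ) / 4) / Real.sqrt Real.pi) *
        Real.exp (-(ωp * (x + y) ^ 2 + ωm * (x - y) ^ 2) / 4))
    (x x' : ℝ) :
    (∫ y : ℝ, Ψ x y * Ψ x' y)
      = Real.sqrt ((γ - β) / Real.pi) *
        Real.exp (-(γ / 2) * (x ^ 2 + x' ^ 2) + β * x * x') := by
  have hs : 0 < ωp + ωm := by linarith
  have ha : (0:ℝ) < (ωp + ωm) / 2 := by linarith
  set C : ℝ := (ωp * ωm) ^ ((1 : ℝ) / 4) / Real.sqrt Real.pi with hC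
  set a : ℝ := (ωp + ωm) / 2 with haa
  set b : ℝ := -((ωp - ωm) * (x + x')) / 2 with hb
  set c : ℝ := -((ωp + ωm) * (x ^ 2 + x' ^ 2)) / 4 with hc
  have key : ∀ y : ℝ, Ψ x y * Ψ x' y
      = (C ^ 2 * Real.exp c) * Real.exp (-a * y ^ 2 + b * y) := by
    intro y
    have hr : C ^ 2 * Real.exp c * Real.exp (-a * y ^ 2 + b * y)
        = C ^ 2 * Real.exp (c + (-a * y ^ 2 + b * y)) := by
      rw [mul_assoc, ← Real.exp_add]
    rw [hΨ, hΨ, hr, mul_mul_mul_comm, ← sq, ← Real.exp_add]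
    congr 1
    rw [haa, hb, hc]
    ring
  simp_rw [key]
  rw [integral_const_mul, gauss_complete_square a b ha]
  have hC2 : C ^ 2 = Real.sqrt (ωp * ωm) / Real.pi := by
    rw [hC, div_pow, Real.sq_sqrt Real.pi_pos.le, ← Real.rpow_natCast _ 2,
      ← Real.rpow_mul (by positivity)]
    norm_num
    rw [Real.sqrt_eq_rpow]
  have hpre : C ^ 2 * Real.sqrt (Real.pi / a) = Real.sqrt ((γ - β) / Real.pi) := by
    rw [hC2, div_mul_eq_mul_div, ← Real.sqrt_mul (by positivity)]
    rw [show Real.pi = Real.sqrt (Real.pi ^ 2) by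
      rw [Real.sqrt_sq Real.pi_pos.le]]
    rw [← Real.sqrt_div (by positivity)]
    congr 1
    rw [hγ, haa]
    field_simp
    simp only [Real.sqrt_sq Real.pi_pos.le]
    ring
  rw [mul_assoc, mul_comm (Real.exp c), mul_assoc, ← Real.exp_add, ← mul_assoc, hpre]
  congr 1
  rw [hb, hc, haa, hγ, hβ]
  field_simp
  ring
end

section
/- Hermite–Gaussian eigenfunctions of the Gaussian (Mehler) kernel: let β, γ be real with 0 ≤ β < γ, set α = √(γ² − β²) and ξ = β/(α + γ). Define the kernel ρ(x,x′) = √((γ−β)/π) · exp(−(γ/2)·(x² + x′²) + β·x·x′) and, for n : ℕ, the function f_n(x) = He_n(√(2α)·x) · exp(−α·x²/2), where He_n is the n-th Hermite polynomial (Mathlib's Polynomial.hermite n, with integer coefficients, evaluated over ℝ). Then for every n : ℕ and every x : ℝ, ∫_{x′ ∈ ℝ} ρ(x,x′)·f_n(x′) dx′ = (1−ξ)·ξⁿ · f_n(x). -/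
open MeasureTheory

section MehlerAux
open Polynomial Filter Real Topology
namespace MehlerAux
set_option linter.dupNamespace false


/-- Real Hermite polynomial. -/
noncomputable def H (n : ℕ) : ℝ[X] := (hermite n).map (algebraMap ℤ ℝ)

lemma H_eval (n : ℕ) (r : ℝ) : aeval r (hermite n) = (H n).eval r := by
  rw [H, eval_map, aeval_def]

lemma H_zero : H 0 = 1 := by simp [H, hermite_zero]

lemma H_one : H 1 = X := by simp [H, hermite_one]

lemma H_succ (n : ℕ) : H (n + 1) = X * H n - derivative (H n) := by
  rw [H, hermite_succ]
  simp [Polynomial.map_sub, Polynomial.map_mul, derivative_map, H]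

lemma H_deriv : ∀ n : ℕ, derivative (H (n + 1)) = C ((n : ℝ) + 1) * H n := by
  intro n
  induction n with
  | zero => simp [H_one, H_zero]
  | succ m ih =>
      have key : derivative (H (m + 1 + 1))
          = H (m + 1) + C ((m : ℝ) + 1) * (X * H m - derivative (H m)) := by
        rw [H_succ (m + 1), derivative_sub, derivative_mul, derivative_X, one_mul, ih,
          derivative_mul, derivative_C, zero_mul, zero_add]
        ring
      rw [key, ← H_succ m]
      have : (C ((m : ℝ) + 1 + 1) : ℝ[X]) = C ((m : ℝ) + 1) + 1 := by
        rw [← C_1, ← C_add]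
      push_cast
      rw [this]
      ring

/-- The (n+2)-term recurrence over ℝ. -/
lemma H_rec (n : ℕ) : H (n + 2) = X * H (n + 1) - C ((n : ℝ) + 1) * H n := by
  rw [show n + 2 = (n + 1) + 1 from rfl, H_succ (n + 1), H_deriv n]




/-- Decay of polynomial × Gaussian at +∞. -/
lemma tendsto_poly_gauss_atTop {a : ℝ} (ha : 0 < a) (b : ℝ) (P : ℝ[X]) :
    Tendsto (fun t : ℝ => P.eval t * Real.exp (-a * t ^ 2 + b * t)) atTop (𝓝 0) := by
  rw [tendsto_zero_iff_norm_tendsto_zero]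
  apply squeeze_zero' (Eventually.of_forall fun t => norm_nonneg _)
      (g := fun t => ‖P.eval t / Real.exp t‖)
  · filter_upwards [eventually_ge_atTop (max 1 ((b + 1) / a))] with t ht
    have ht1 : (1 : ℝ) ≤ t := le_trans (le_max_left _ _) ht
    have ht2 : (b + 1) / a ≤ t := le_trans (le_max_right _ _) ht
    have hexp : -a * t ^ 2 + b * t ≤ -t := by
      have h3 : (b + 1) ≤ a * t := by
        rw [div_le_iff₀ ha] at ht2; linarith [ht2]
      nlinarith [mul_le_mul_of_nonneg_right h3 (by linarith : (0:ℝ) ≤ t)]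
    rw [norm_mul, norm_div, Real.norm_eq_abs (Real.exp _), Real.norm_eq_abs (Real.exp _),
      abs_of_pos (Real.exp_pos _), abs_of_pos (Real.exp_pos _), div_eq_mul_inv, ← Real.exp_neg]
    exact mul_le_mul_of_nonneg_left (Real.exp_le_exp.2 hexp) (norm_nonneg _)
  · rw [← tendsto_zero_iff_norm_tendsto_zero]
    exact P.tendsto_div_exp_atTop

/-- Decay of polynomial × Gaussian at −∞. -/
lemma tendsto_poly_gauss_atBot {a : ℝ} (ha : 0 < a) (b : ℝ) (P : ℝ[X]) :
    Tendsto (fun t : ℝ => P.eval t * Real.exp (-a * t ^ 2 + b * t)) atBot (𝓝 0) := by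
  have h := tendsto_poly_gauss_atTop ha (-b) (P.comp (-X))
  have := h.comp tendsto_neg_atBot_atTop
  convert this using 2 with t
  simp only [Function.comp_apply, eval_comp, eval_neg, eval_X]
  ring_nf

/-- Integrability of polynomial × Gaussian. -/
lemma integrable_poly_gauss {a : ℝ} (ha : 0 < a) (b : ℝ) (P : ℝ[X]) :
    Integrable (fun t : ℝ => P.eval t * Real.exp (-a * t ^ 2 + b * t)) := by
  set g : ℝ → ℝ := fun t => P.eval t * Real.exp (-(a / 2) * t ^ 2 + b * t) with hg
  have hcont : Continuous g := by
    exact (P.continuous_aeval.mul ((continuous_const.mul (continuous_pow 2)).add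
      (continuous_const.mul continuous_id)).rexp)
  have h1 : Tendsto g atTop (𝓝 0) := tendsto_poly_gauss_atTop (by linarith) b P
  have h2 : Tendsto g atBot (𝓝 0) := tendsto_poly_gauss_atBot (by linarith) b P
  -- g is globally bounded
  obtain ⟨R1, hR1⟩ := eventually_atTop.mp ((tendsto_zero_iff_norm_tendsto_zero.mp h1).eventually_lt_const one_pos)
  obtain ⟨R2, hR2⟩ := eventually_atBot.mp ((tendsto_zero_iff_norm_tendsto_zero.mp h2).eventually_lt_const one_pos)
  obtain ⟨C0, hC0⟩ := (isCompact_Icc (a := R2) (b := R1)).exists_bound_of_continuousOn hcont.continuousOn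
  set C : ℝ := max C0 1 with hC
  have hbound : ∀ t, ‖g t‖ ≤ C := by
    intro t
    rcases le_total t R2 with h | h
    · exact le_trans (hR2 t h).le (le_max_right _ _)
    · rcases le_total R1 t with h' | h'
      · exact le_trans (hR1 t h').le (le_max_right _ _)
      · exact le_trans (hC0 t ⟨h, h'⟩) (le_max_left _ _)
  have hint : Integrable (fun t : ℝ => C * Real.exp (-(a / 2) * t ^ 2)) :=
    (integrable_exp_neg_mul_sq (by linarith)).const_mul C
  refine hint.mono' ?_ (Eventually.of_forall fun t => ?_)
  · exact ((P.continuous_aeval.mul ((continuous_const.mul (continuous_pow 2)).add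
      (continuous_const.mul continuous_id)).rexp)).aestronglyMeasurable
  · have : P.eval t * Real.exp (-a * t ^ 2 + b * t)
        = g t * Real.exp (-(a / 2) * t ^ 2) := by
      rw [hg]; rw [mul_assoc, ← Real.exp_add]; ring_nf
    rw [this, norm_mul]
    have h2' : ‖Real.exp (-(a / 2) * t ^ 2)‖ = Real.exp (-(a / 2) * t ^ 2) :=
      Real.norm_of_nonneg (Real.exp_pos _).le
    rw [h2']
    exact mul_le_mul_of_nonneg_right (hbound t) (Real.exp_pos _).le



lemma integral_deriv_zero (f f' : ℝ → ℝ) (hderiv : ∀ t, HasDerivAt f (f' t) t)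
    (hint : Integrable f') (htop : Tendsto f atTop (𝓝 0))
    (hbot : Tendsto f atBot (𝓝 0)) : ∫ t : ℝ, f' t = 0 := by
  have h1 : Tendsto (fun R : ℝ => ∫ t in (-R)..R, f' t) atTop (𝓝 (∫ t : ℝ, f' t)) :=
    intervalIntegral_tendsto_integral hint tendsto_neg_atTop_atBot tendsto_id
  have h2 : ∀ R : ℝ, (∫ t in (-R)..R, f' t) = f R - f (-R) := by
    intro R
    exact intervalIntegral.integral_eq_sub_of_hasDerivAt (fun t _ => hderiv t)
      hint.intervalIntegrable
  have h3 : Tendsto (fun R : ℝ => f R - f (-R)) atTop (𝓝 (0 - 0)) :=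
    htop.sub (hbot.comp tendsto_neg_atTop_atBot)
  rw [sub_zero] at h3
  have := h1.congr fun R => h2 R
  exact tendsto_nhds_unique this h3



noncomputable def J (a b : ℝ) (Q : ℝ[X]) : ℝ :=
  ∫ t : ℝ, Q.eval t * Real.exp (-a * t ^ 2 + b * t)

lemma J_lin {a : ℝ} (ha : 0 < a) (b r s : ℝ) (Q1 Q2 : ℝ[X]) :
    J a b (C r * Q1 + C s * Q2) = r * J a b Q1 + s * J a b Q2 := by
  unfold J
  rw [← integral_const_mul, ← integral_const_mul,
    ← integral_add ((integrable_poly_gauss ha b Q1).const_mul r)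
      ((integrable_poly_gauss ha b Q2).const_mul s)]
  congr 1; funext t; simp; ring

lemma J_lin3 {a : ℝ} (ha : 0 < a) (b r s u : ℝ) (Q1 Q2 Q3 : ℝ[X]) :
    J a b (C r * Q1 + C s * Q2 + C u * Q3)
      = r * J a b Q1 + s * J a b Q2 + u * J a b Q3 := by
  have h1 : C r * Q1 + C s * Q2 + C u * Q3
      = C 1 * (C r * Q1 + C s * Q2) + C u * Q3 := by rw [C_1]; ring
  rw [h1, J_lin ha, J_lin ha]; ring

/-- Key integration-by-parts identity. -/
lemma J_deriv {a : ℝ} (ha : 0 < a) (b : ℝ) (P : ℝ[X]) :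
    J a b (derivative P + (C b - C (2 * a) * X) * P) = 0 := by
  unfold J
  apply integral_deriv_zero (f := fun t => P.eval t * Real.exp (-a * t ^ 2 + b * t))
  · intro t
    have h1 : HasDerivAt (fun t : ℝ => -a * t ^ 2 + b * t) (-a * (2 * t) + b) t := by
      have := ((hasDerivAt_pow 2 t).const_mul (-a)).add ((hasDerivAt_id t).const_mul b)
      simpa [mul_comm, Pi.add_def] using this
    have h2 := (P.hasDerivAt t).fun_mul h1.exp
    refine h2.congr_deriv ?_
    simp only [eval_add, eval_mul, eval_sub, eval_C, eval_X]
    ring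
  · exact integrable_poly_gauss ha b _
  · exact tendsto_poly_gauss_atTop ha b P
  · exact tendsto_poly_gauss_atBot ha b P

/-- Gaussian integral with linear term. -/
lemma J_one {a : ℝ} (ha : 0 < a) (b : ℝ) :
    J a b 1 = Real.sqrt (π / a) * Real.exp (b ^ 2 / (4 * a)) := by
  unfold J
  have key : ∀ t : ℝ, (1 : ℝ[X]).eval t * Real.exp (-a * t ^ 2 + b * t)
      = Real.exp (b ^ 2 / (4 * a)) * Real.exp (-a * (t - b / (2 * a)) ^ 2) := by
    intro t
    rw [eval_one, one_mul, ← Real.exp_add]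
    congr 1
    field_simp
    ring
  simp_rw [key]
  rw [integral_const_mul, integral_sub_right_eq_self (fun u => Real.exp (-a * u ^ 2)) (b / (2*a)),
    integral_gaussian]
  ring


end MehlerAux

set_option maxHeartbeats 1000000 in
open MehlerAux in
/-- Hermite–Gaussian eigenfunctions of the Gaussian (Mehler) kernel -/
theorem mehler_kernel_eigenfunctions
    (β γ : ℝ) (hβ : 0 ≤ β) (hβγ : β < γ)
    (α ξ : ℝ) (hα : α = Real.sqrt (γ ^ 2 - β ^ 2)) (hξ : ξ = β / (α + γ))
    (ρ : ℝ → ℝ → ℝ)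
    (hρ : ∀ x x', ρ x x' = Real.sqrt ((γ - β) / Real.pi) *
        Real.exp (-(γ / 2) * (x ^ 2 + x' ^ 2) + β * x * x'))
    (f : ℕ → ℝ → ℝ)
    (hf : ∀ n x, f n x =
        Polynomial.aeval (Real.sqrt (2 * α) * x) (Polynomial.hermite n) *
          Real.exp (-α * x ^ 2 / 2))
    (n : ℕ) (x : ℝ) :
    (∫ x' : ℝ, ρ x x' * f n x') = (1 - ξ) * ξ ^ n * f n x := by
  classical
  -- positivity facts
  have hγ : 0 < γ := lt_of_le_of_lt hβ hβγ
  have hγβ : 0 < γ ^ 2 - β ^ 2 := by nlinarith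
  have hαpos : 0 < α := by rw [hα]; exact Real.sqrt_pos.mpr hγβ
  have hα2 : α ^ 2 = γ ^ 2 - β ^ 2 := by rw [hα]; exact Real.sq_sqrt hγβ.le
  set c : ℝ := Real.sqrt (2 * α) with hc
  have hc2 : c ^ 2 = 2 * α := Real.sq_sqrt (by linarith)
  set a : ℝ := (γ + α) / 2 with ha'
  have ha : 0 < a := by rw [ha']; linarith
  set b : ℝ := β * x with hb
  have hγα : 0 < α + γ := by linarith
  -- the scaled Hermite polynomials
  set P : ℕ → Polynomial ℝ := fun m => (H m).comp (Polynomial.C c * Polynomial.X) with hP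
  set K : ℕ → ℝ := fun m => J a b (P m) with hK
  set M : ℕ → ℝ := fun m => J a b (Polynomial.X * P m) with hM
  have hP0 : P 0 = 1 := by simp [hP, H_zero]
  have hPd : ∀ m : ℕ, Polynomial.derivative (P (m + 1))
      = Polynomial.C (c * ((m : ℝ) + 1)) * P m := by
    intro m
    have hq : Polynomial.derivative (Polynomial.C c * Polynomial.X) = Polynomial.C c := by
      simp
    simp only [hP]
    rw [Polynomial.derivative_comp, hq, H_deriv, Polynomial.mul_comp, Polynomial.C_comp,
      ← mul_assoc, ← Polynomial.C_mul]
  have hM0 : 2 * a * M 0 = b * K 0 := by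
    have h := J_deriv ha b (P 0)
    have harg : Polynomial.derivative (P 0)
        + (Polynomial.C b - Polynomial.C (2 * a) * Polynomial.X) * P 0
        = Polynomial.C b * P 0 + Polynomial.C (-(2 * a)) * (Polynomial.X * P 0) := by
      rw [hP0, map_neg]
      simp only [Polynomial.derivative_one]
      ring
    rw [harg, J_lin ha] at h
    simp only [hK, hM]
    linarith
  have hMs : ∀ m : ℕ, 2 * a * M (m + 1) = b * K (m + 1) + c * ((m : ℝ) + 1) * K m := by
    intro m
    have h := J_deriv ha b (P (m + 1))
    have harg : Polynomial.derivative (P (m + 1))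
        + (Polynomial.C b - Polynomial.C (2 * a) * Polynomial.X) * P (m + 1)
        = Polynomial.C (c * ((m : ℝ) + 1)) * P m + Polynomial.C b * P (m + 1)
          + Polynomial.C (-(2 * a)) * (Polynomial.X * P (m + 1)) := by
      rw [hPd m, map_neg]
      ring
    rw [harg, J_lin3 ha] at h
    simp only [hK, hM]
    linarith
  have hK1 : K 1 = c * M 0 := by
    have h1 : P 1 = Polynomial.C c * (Polynomial.X * P 0) + Polynomial.C 0 * 1 := by
      rw [hP0]
      simp [hP, H_one]
    simp only [hK, hM, h1, J_lin ha]
    ring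
  have hK2 : ∀ m : ℕ, K (m + 2) = c * M (m + 1) - ((m : ℝ) + 1) * K m := by
    intro m
    have h2 : P (m + 2) = Polynomial.C c * (Polynomial.X * P (m + 1))
        + Polynomial.C (-((m : ℝ) + 1)) * P m := by
      simp only [hP, H_rec]
      rw [Polynomial.sub_comp, Polynomial.mul_comp, Polynomial.mul_comp, Polynomial.X_comp,
        Polynomial.C_comp, map_neg]
      ring
    simp only [hK, hM] at *
    rw [h2, J_lin ha]
    ring
  -- the closed recurrences
  have hξcx : ξ * (α + γ) = β := by rw [hξ]; field_simp
  have hξ2 : ξ ^ 2 * (γ + α) = γ - α := by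
    have h := hξcx
    have : ξ ^ 2 * (α + γ) ^ 2 = β ^ 2 := by rw [← h]; ring
    have hne : (α + γ) ≠ 0 := ne_of_gt hγα
    field_simp at this ⊢
    nlinarith [this, hα2]
  have hKr1 : K 1 = (ξ * c * x) * K 0 := by
    rw [hK1]
    have h2a : (2 : ℝ) * a = γ + α := by rw [ha']; ring
    have hMval : M 0 = b * K 0 / (γ + α) := by
      rw [eq_div_iff (by linarith : (γ + α) ≠ 0)]
      linarith [hM0, h2a.symm ▸ hM0]
    rw [hMval, hb]
    field_simp
    linear_combination (-(c * x * K 0)) * hξcx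
  have hKr2 : ∀ m : ℕ, K (m + 2) = (ξ * c * x) * K (m + 1) - ((m : ℝ) + 1) * ξ ^ 2 * K m := by
    intro m
    have h2a : (2 : ℝ) * a = γ + α := by rw [ha']; ring
    have hM' : (γ + α) * M (m + 1) = β * x * K (m + 1) + c * ((m : ℝ) + 1) * K m := by
      rw [← h2a, ← hb]
      linarith [hMs m]
    rw [hK2 m]
    apply mul_left_cancel₀ (by linarith : (γ + α) ≠ 0)
    linear_combination c * hM' - (c * x * K (m + 1)) * hξcx
      + (((m : ℝ) + 1) * K m) * hc2 + (((m : ℝ) + 1) * K m) * hξ2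
  -- main induction
  have hmain : ∀ m : ℕ, K m = ξ ^ m * (H m).eval (c * x) * K 0
      ∧ K (m + 1) = ξ ^ (m + 1) * (H (m + 1)).eval (c * x) * K 0 := by
    intro m
    induction m with
    | zero =>
        constructor
        · simp [H_zero]
        · show K 1 = ξ ^ 1 * (H 1).eval (c * x) * K 0
          rw [hKr1, H_one, pow_one, Polynomial.eval_X]
          ring
    | succ m ih =>
        refine ⟨ih.2, ?_⟩
        have hHe : (H (m + 2)).eval (c * x)
            = (c * x) * (H (m + 1)).eval (c * x) - ((m : ℝ) + 1) * (H m).eval (c * x) := by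
          rw [H_rec]
          simp
        rw [show m + 1 + 1 = m + 2 from rfl, hKr2 m, ih.1, ih.2, hHe]
        ring
  -- value of K 0
  have hK0 : K 0 = Real.sqrt (Real.pi / a) * Real.exp (b ^ 2 / (4 * a)) := by
    simp only [hK, hP0]
    exact J_one ha b
  -- rewrite the integral
  have hpoint : ∀ x', ρ x x' * f n x'
      = (Real.sqrt ((γ - β) / Real.pi) * Real.exp (-(γ / 2) * x ^ 2))
        * ((P n).eval x' * Real.exp (-a * x' ^ 2 + b * x')) := by
    intro x'
    rw [hρ, hf, H_eval]
    have hev : (P n).eval x' = (H n).eval (c * x') := by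
      simp [hP, Polynomial.eval_comp]
    rw [hev]
    have e1 : Real.exp (-(γ / 2) * (x ^ 2 + x' ^ 2) + β * x * x')
        * Real.exp (-α * x' ^ 2 / 2)
        = Real.exp (-(γ / 2) * x ^ 2) * Real.exp (-a * x' ^ 2 + b * x') := by
      rw [← Real.exp_add, ← Real.exp_add]
      congr 1
      rw [ha', hb]
      ring
    calc Real.sqrt ((γ - β) / Real.pi)
          * Real.exp (-(γ / 2) * (x ^ 2 + x' ^ 2) + β * x * x')
          * ((H n).eval (c * x') * Real.exp (-α * x' ^ 2 / 2))
        = Real.sqrt ((γ - β) / Real.pi) * (H n).eval (c * x')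
          * (Real.exp (-(γ / 2) * (x ^ 2 + x' ^ 2) + β * x * x')
            * Real.exp (-α * x' ^ 2 / 2)) := by ring
      _ = _ := by rw [e1]; ring
  have hintg : (∫ x' : ℝ, ρ x x' * f n x')
      = (Real.sqrt ((γ - β) / Real.pi) * Real.exp (-(γ / 2) * x ^ 2)) * K n := by
    simp_rw [hpoint]
    rw [MeasureTheory.integral_const_mul]
    rfl
  -- constants
  have h1ξ : 0 ≤ 1 - ξ := by
    rw [hξ]
    rw [sub_nonneg, div_le_one hγα]
    linarith
  have hexp : -(γ / 2) * x ^ 2 + b ^ 2 / (4 * a) = -α * x ^ 2 / 2 := by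
    rw [hb, ha']
    have hne : (γ + α) ≠ 0 := by linarith
    field_simp
    linear_combination (4 * x ^ 2) * hα2
  have hconst : Real.sqrt ((γ - β) / Real.pi) * Real.sqrt (Real.pi / a) = 1 - ξ := by
    have h1 : (0 : ℝ) ≤ (γ - β) / Real.pi :=
      div_nonneg (by linarith) Real.pi_pos.le
    rw [← Real.sqrt_mul h1]
    have h2 : (γ - β) / Real.pi * (Real.pi / a) = (1 - ξ) ^ 2 := by
      rw [hξ, ha']
      have hπ : Real.pi ≠ 0 := Real.pi_ne_zero
      have hne : (α + γ) ≠ 0 := ne_of_gt hγα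
      field_simp
      linear_combination (-(γ + α)) * hα2
    rw [h2, Real.sqrt_sq h1ξ]
  -- final assembly
  rw [hintg, (hmain n).1, hK0, hf, H_eval]
  rw [show -α * x ^ 2 / 2 = -(γ / 2) * x ^ 2 + b ^ 2 / (4 * a) from hexp.symm, Real.exp_add]
  rw [← hconst]
  ring
end MehlerAux
end

section
/- Entropic c-theorem in (1+1) dimensions: let S, S′, S″ : ℝ → ℝ be such that for every R > 0, S has derivative S′(R) at R and S′ has derivative S″(R) at R (HasDerivAt). Assume the strong-subadditivity inequality S(R) + S(r) ≤ 2·S(√(r·R)) holds for all r, R > 0. Then for every R > 0, S′(R) + R·S″(R) ≤ 0; equivalently, the entropic c-function c_E(R) = 3·R·S′(R) has nonpositive derivative, so it is monotonically nonincreasing on (0,∞). -/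
/-- Pointwise part of the entropic c-theorem. -/
lemma entropic_c_theorem_aux (S S' S'' : ℝ → ℝ)
    (hd1 : ∀ R > (0 : ℝ), HasDerivAt S (S' R) R)
    (hd2 : ∀ R > (0 : ℝ), HasDerivAt S' (S'' R) R)
    (hssa : ∀ r > (0 : ℝ), ∀ R > (0 : ℝ),
      S R + S r ≤ 2 * S (Real.sqrt (r * R))) :
    ∀ R > (0 : ℝ), S' R + R * S'' R ≤ 0 := by
  -- pass to g(t) = S(exp t)
  set g : ℝ → ℝ := fun t => S (Real.exp t) with hgdef
  set g' : ℝ → ℝ := fun t => S' (Real.exp t) * Real.exp t with hg'def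
  have hg : ∀ t : ℝ, HasDerivAt g (g' t) t := fun t =>
    (hd1 _ (Real.exp_pos t)).comp t (Real.hasDerivAt_exp t)
  have hg' : ∀ t : ℝ, HasDerivAt g'
      (S'' (Real.exp t) * Real.exp t * Real.exp t + S' (Real.exp t) * Real.exp t) t :=
    fun t =>
      (((hd2 _ (Real.exp_pos t)).comp t (Real.hasDerivAt_exp t)).mul (Real.hasDerivAt_exp t))
  -- midpoint concavity of g
  have hmid : ∀ t h : ℝ, g (t + h) + g (t - h) ≤ 2 * g t := by
    intro t h
    have := hssa (Real.exp (t - h)) (Real.exp_pos _) (Real.exp (t + h)) (Real.exp_pos _)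
    have hprod : Real.exp (t - h) * Real.exp (t + h) = Real.exp t * Real.exp t := by
      rw [← Real.exp_add, ← Real.exp_add]; ring_nf
    rw [hprod, Real.sqrt_mul_self (Real.exp_nonneg t)] at this
    simpa [hgdef] using this
  intro R hR
  by_contra hc
  push_neg at hc
  set t₀ := Real.log R with ht₀
  have hexp : Real.exp t₀ = R := Real.exp_log hR
  have hgpp : HasDerivAt g' (S'' R * R * R + S' R * R) t₀ := by
    have := hg' t₀; rwa [hexp] at this
  have hpos : 0 < S'' R * R * R + S' R * R := by nlinarith
  -- slope of g' is eventually positive near t₀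
  have hslope : Filter.Tendsto (slope g' t₀) (nhdsWithin t₀ {t₀}ᶜ)
      (nhds (S'' R * R * R + S' R * R)) := by
    rw [hasDerivAt_iff_tendsto_slope] at hgpp; exact hgpp
  have hev : ∀ᶠ t in nhdsWithin t₀ {t₀}ᶜ, 0 < slope g' t₀ t :=
    hslope.eventually (eventually_gt_nhds hpos)
  rw [eventually_nhdsWithin_iff, Metric.eventually_nhds_iff] at hev
  obtain ⟨ε, hε, hball⟩ := hev
  set h := ε / 2 with hh
  have hhpos : 0 < h := by positivity
  have key : ∀ ξ : ℝ, ξ ≠ t₀ → |ξ - t₀| < ε → 0 < (g' ξ - g' t₀) / (ξ - t₀) := by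
    intro ξ hne hd
    have := hball (show dist ξ t₀ < ε by simpa [Real.dist_eq] using hd) hne
    simpa [slope_def_field, div_eq_iff, sub_ne_zero.mpr hne] using this
  -- MVT on [t₀, t₀ + h]
  have hcont : ∀ a b : ℝ, ContinuousOn g (Set.Icc a b) := fun a b =>
    fun x _ => (hg x).continuousAt.continuousWithinAt
  obtain ⟨ξ₁, hξ₁mem, hξ₁⟩ := exists_hasDerivAt_eq_slope g g'
    (show t₀ < t₀ + h by linarith) (hcont _ _) (fun x _ => hg x)
  obtain ⟨ξ₂, hξ₂mem, hξ₂⟩ := exists_hasDerivAt_eq_slope g g'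
    (show t₀ - h < t₀ by linarith) (hcont _ _) (fun x _ => hg x)
  obtain ⟨h1l, h1r⟩ := hξ₁mem
  obtain ⟨h2l, h2r⟩ := hξ₂mem
  have k1 : 0 < (g' ξ₁ - g' t₀) / (ξ₁ - t₀) := by
    apply key _ (by linarith) (by rw [abs_of_pos (by linarith)]; linarith)
  have k2 : 0 < (g' ξ₂ - g' t₀) / (ξ₂ - t₀) := by
    apply key _ (by linarith) (by rw [abs_of_neg (by linarith)]; linarith)
  have gt1 : g' t₀ < g' ξ₁ := by
    rcases div_pos_iff.mp k1 with ⟨ha, _⟩ | ⟨_, hb⟩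
    · linarith
    · linarith
  have lt2 : g' ξ₂ < g' t₀ := by
    rcases div_pos_iff.mp k2 with ⟨_, hb⟩ | ⟨ha, _⟩
    · linarith
    · linarith
  -- combine with midpoint concavity
  have hm := hmid t₀ h
  have e1 : g (t₀ + h) - g t₀ = g' ξ₁ * h := by
    have : g' ξ₁ = (g (t₀ + h) - g t₀) / (t₀ + h - t₀) := hξ₁
    rw [this, show t₀ + h - t₀ = h by ring, div_mul_cancel₀ _ hhpos.ne']
  have e2 : g t₀ - g (t₀ - h) = g' ξ₂ * h := by
    have : g' ξ₂ = (g t₀ - g (t₀ - h)) / (t₀ - (t₀ - h)) := hξ₂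
    rw [this, show t₀ - (t₀ - h) = h by ring, div_mul_cancel₀ _ hhpos.ne']
  nlinarith [mul_lt_mul_of_pos_right (lt_trans lt2 gt1) hhpos]

/-- The entropic c-theorem in (1+1) dimensions: if the entanglement entropy `S` of an
interval satisfies the strong-subadditivity inequality `S(R) + S(r) ≤ 2·S(√(rR))`
for all `r, R > 0`, then `S′(R) + R·S″(R) ≤ 0` for all `R > 0`; equivalently the
entropic c-function `c_E(R) = 3·R·S′(R)` is monotonically nonincreasing on `(0,∞)`. -/
theorem entropic_c_theorem (S S' S'' : ℝ → ℝ)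
    (hd1 : ∀ R > (0 : ℝ), HasDerivAt S (S' R) R)
    (hd2 : ∀ R > (0 : ℝ), HasDerivAt S' (S'' R) R)
    (hssa : ∀ r > (0 : ℝ), ∀ R > (0 : ℝ),
      S R + S r ≤ 2 * S (Real.sqrt (r * R))) :
    (∀ R > (0 : ℝ), S' R + R * S'' R ≤ 0) ∧
    AntitoneOn (fun R => 3 * R * S' R) (Set.Ioi (0 : ℝ)) := by
  have hmain := entropic_c_theorem_aux S S' S'' hd1 hd2 hssa
  refine ⟨hmain, ?_⟩
  have hderiv : ∀ R ∈ Set.Ioi (0:ℝ), HasDerivAt (fun R => 3 * R * S' R)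
      (3 * S' R + 3 * R * S'' R) R := by
    intro R hR
    have h1 : HasDerivAt (fun R : ℝ => 3 * R) 3 R := by
      simpa using (hasDerivAt_id R).const_mul (3:ℝ)
    have := h1.mul (hd2 R hR)
    exact this
  apply antitoneOn_of_deriv_nonpos (convex_Ioi 0)
  · exact fun x hx => ((hderiv x hx).continuousAt.continuousWithinAt)
  · rw [interior_Ioi]; exact fun x hx => (hderiv x hx).differentiableAt.differentiableWithinAt
  · rw [interior_Ioi]
    intro x hx
    rw [(hderiv x hx).deriv]
    have := hmain x hx
    nlinarith
end

section
/- F-theorem in (2+1) dimensions (monotonicity step): let S : ℝ → ℝ be twice continuously differentiable on (0,∞) (ContDiffOn ℝ 2 S (Set.Ioi 0)). Assume that for all r, R with 0 < r ≤ R the averaged strong-subadditivity inequality ∫_{θ=0}^{π} S( 2·r·R / (R + r − (R − r)·cos θ) ) dθ ≤ π · S(√(r·R)) holds (interval integral). Then S is concave on (0,∞): for every R > 0 the second derivative satisfies deriv (deriv S) R ≤ 0; consequently the renormalized entanglement entropy 𝓕(R) := R·(deriv S R) − S(R) satisfies deriv 𝓕 R = R·(deriv (deriv S) R) ≤ 0,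 so 𝓕 is monotonically nonincreasing on (0,∞). -/
open Real Set intervalIntegral


lemma hasDerivAt_H (p q : ℝ) (hq : 0 < q) (hpq : q < p) (θ : ℝ) :
    HasDerivAt (fun x : ℝ => (x + 2 * Real.arctan (q * Real.sin x /
        (p + Real.sqrt (p^2 - q^2) - q * Real.cos x))) / Real.sqrt (p^2 - q^2))
      (p - q * Real.cos θ)⁻¹ θ := by
  set s := Real.sqrt (p^2 - q^2) with hs
  have hq0 : (0:ℝ) < p - q := by linarith
  have hs2 : s^2 = p^2 - q^2 := Real.sq_sqrt (by nlinarith)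
  have hspos : 0 < s := Real.sqrt_pos.2 (by nlinarith)
  have hden : ∀ x : ℝ, 0 < p + s - q * Real.cos x := by
    intro x
    nlinarith [Real.neg_one_le_cos x, Real.cos_le_one x]
  have hdenθ : 0 < p - q * Real.cos θ := by
    nlinarith [Real.neg_one_le_cos θ, Real.cos_le_one θ]
  have h1 : HasDerivAt (fun x : ℝ => q * Real.sin x / (p + s - q * Real.cos x))
      ((q * Real.cos θ * (p + s - q * Real.cos θ) - q * Real.sin θ * (q * Real.sin θ)) /
        (p + s - q * Real.cos θ)^2) θ := by
    have hnum : HasDerivAt (fun x : ℝ => q * Real.sin x) (q * Real.cos θ) θ :=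
      (Real.hasDerivAt_sin θ).const_mul q
    have hden' : HasDerivAt (fun x : ℝ => p + s - q * Real.cos x) (q * Real.sin θ) θ := by
      have := ((Real.hasDerivAt_cos θ).const_mul q).const_sub (p + s)
      simpa using this
    exact hnum.div hden' (ne_of_gt (hden θ))
  have h2 := h1.arctan
  have h3 := ((hasDerivAt_id θ).add (h2.const_mul 2)).div_const s
  refine h3.congr_deriv ?_
  symm
  set c := Real.cos θ
  set t := Real.sin θ
  have hct : t^2 = 1 - c^2 := by
    have := Real.sin_sq_add_cos_sq θ; linarith
  set d := p + s - q * c with hdd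
  have hd : 0 < d := hden θ
  set N := q * c * d - q * t * (q * t) with hN
  set M := d^2 + q^2 * t^2 with hMdef
  have hMpos : 0 < M := by positivity
  have hu : 1 + (q * t / d)^2 = M / d^2 := by
    rw [hMdef]; field_simp
  have hB : 1 / (1 + (q * t / d)^2) * (N / d^2) = N / M := by
    rw [hu]; field_simp
  rw [hB]
  have hMN : M + 2*N = 2*s*(p+s) := by
    rw [hMdef, hN, hdd]; linear_combination -hs2 - q^2*hct
  have hM2 : M = 2*(p+s)*(p-q*c) := by
    rw [hMdef, hdd]; linear_combination hs2 + q^2*hct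
  field_simp
  linear_combination (p - q*c)*hMN - s*hM2 + 2*(p+s-q*c)*hs2 + 2*q^2*(p+s-q*c)*hct
lemma integral_inv_p_sub_q_cos (p q : ℝ) (hq : 0 < q) (hpq : q < p) :
    ∫ θ in (0:ℝ)..Real.pi, (p - q * Real.cos θ)⁻¹
      = Real.pi / Real.sqrt (p^2 - q^2) := by
  have hne : ∀ x : ℝ, p - q * Real.cos x ≠ 0 := by
    intro x
    nlinarith [Real.neg_one_le_cos x, Real.cos_le_one x]
  have hcont : Continuous fun x : ℝ => (p - q * Real.cos x)⁻¹ :=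
    (continuous_const.sub (continuous_const.mul Real.continuous_cos)).inv₀ hne
  have hH := fun θ (_ : θ ∈ Set.uIcc (0:ℝ) Real.pi) =>
    hasDerivAt_H p q hq hpq θ
  rw [intervalIntegral.integral_eq_sub_of_hasDerivAt hH
    (hcont.intervalIntegrable 0 Real.pi)]
  simp [Real.sin_pi, Real.cos_pi, Real.sin_zero, Real.cos_zero]

lemma integral_a (r R : ℝ) (hr : 0 < r) (hrR : r < R) :
    ∫ θ in (0:ℝ)..Real.pi, 2 * r * R / (R + r - (R - r) * Real.cos θ)
      = Real.pi * Real.sqrt (r * R) := by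
  set u := Real.sqrt (r * R) with hu
  have h4 : (R + r)^2 - (R - r)^2 = 4 * (r * R) := by ring
  have hsq : u ^ 2 = r * R := Real.sq_sqrt (by nlinarith)
  have hpos : 0 < u := Real.sqrt_pos.2 (by nlinarith)
  have hs4 : Real.sqrt ((R + r)^2 - (R - r)^2) = 2 * u := by
    rw [h4, show 4 * (r * R) = (2 * u)^2 by rw [mul_pow, hsq]; ring]
    exact Real.sqrt_sq (by positivity)
  simp only [div_eq_mul_inv]
  rw [intervalIntegral.integral_const_mul,
    integral_inv_p_sub_q_cos (R + r) (R - r) (by linarith) (by linarith), hs4]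
  field_simp
  linear_combination -hsq
lemma taylor_bound (S : ℝ → ℝ) (m δ ε : ℝ) (hm : 0 < m) (hδ : 0 < δ) (hδm : δ < m)
    (hS : ContDiffOn ℝ 2 S (Set.Ioi (0:ℝ)))
    (hcont : ∀ u, |u - m| ≤ δ → |deriv (deriv S) u - deriv (deriv S) m| ≤ ε) :
    ∀ x, |x - m| ≤ δ →
      |S x - S m - deriv S m * (x - m) - deriv (deriv S) m / 2 * (x - m)^2|
        ≤ ε * (x - m)^2 := by
  intro x hx
  have hεnn : 0 ≤ ε := le_trans (abs_nonneg _) (hcont m (by simp [abs_of_nonneg, hδ.le]))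
  set c2 := deriv (deriv S) m with hc2
  set c1 := deriv S m with hc1
  have hB : Metric.closedBall m δ ⊆ Set.Ioi (0:ℝ) := by
    intro u hu
    have : |u - m| ≤ δ := by simpa [Real.dist_eq] using hu
    have := abs_le.1 this
    simp only [Set.mem_Ioi]
    linarith [this.1]
  have hS1 : ContDiffOn ℝ 1 (deriv S) (Set.Ioi (0:ℝ)) :=
    hS.deriv_of_isOpen isOpen_Ioi (by norm_num)
  have hd0 : ∀ u ∈ Set.Ioi (0:ℝ), DifferentiableAt ℝ S u := fun u hu =>
    (hS.differentiableOn (by norm_num)).differentiableAt (isOpen_Ioi.mem_nhds hu)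
  have hd1 : ∀ u ∈ Set.Ioi (0:ℝ), DifferentiableAt ℝ (deriv S) u := fun u hu =>
    (hS1.differentiableOn (by norm_num)).differentiableAt (isOpen_Ioi.mem_nhds hu)
  -- step 1 : the first-derivative remainder
  set φ := fun u : ℝ => deriv S u - c1 - c2 * (u - m) with hφ
  have hφm : φ m = 0 := by simp [hφ, hc1]
  have hφd : ∀ u ∈ Metric.closedBall m δ,
      HasDerivAt φ (deriv (deriv S) u - c2) u := by
    intro u hu
    have h1 : HasDerivAt (deriv S) (deriv (deriv S) u) u :=
      (hd1 u (hB hu)).hasDerivAt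
    have h2 : HasDerivAt (fun u : ℝ => c1 + c2 * (u - m)) c2 u := by
      have := (((hasDerivAt_id u).sub_const m).const_mul c2).const_add c1
      simpa using this
    have h3 := h1.sub h2
    have he : (fun u : ℝ => deriv S u - (c1 + c2 * (u - m))) = φ := by
      funext y; simp only [hφ]; ring
    rw [← he]
    exact h3
  have step1 : ∀ y ∈ Metric.closedBall m δ, |φ y| ≤ ε * |y - m| := by
    intro y hy
    have hmB : m ∈ Metric.closedBall m δ := Metric.mem_closedBall_self hδ.le
    have := (convex_closedBall m δ).norm_image_sub_le_of_norm_hasDerivWithin_le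
      (f := φ) (f' := fun u => deriv (deriv S) u - c2)
      (fun u hu => (hφd u hu).hasDerivWithinAt)
      (fun u hu => by
        have : |u - m| ≤ δ := by simpa [Real.dist_eq] using hu
        simpa [Real.norm_eq_abs] using hcont u this) hmB hy
    simpa [hφm, Real.norm_eq_abs] using this
  -- step 2 : the second-order remainder
  set ψ := fun u : ℝ => S u - S m - c1 * (u - m) - c2 / 2 * (u - m)^2 with hψ
  have hψm : ψ m = 0 := by simp [hψ]
  have hψd : ∀ u ∈ Metric.closedBall m δ, HasDerivAt ψ (φ u) u := by
    intro u hu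
    have h1 : HasDerivAt S (deriv S u) u := (hd0 u (hB hu)).hasDerivAt
    have h2 : HasDerivAt (fun u : ℝ => S m + c1 * (u - m) + c2 / 2 * (u - m)^2)
        (c1 + c2 * (u - m)) u := by
      have ha := (((hasDerivAt_id u).sub_const m).const_mul c1).const_add (S m)
      have hb := ((((hasDerivAt_id u).sub_const m).pow 2).const_mul (c2 / 2))
      have h := ha.add hb
      refine h.congr_deriv ?_
      push_cast
      simp only [id_eq]
      ring
    have h3 := h1.sub h2
    have he : (fun u : ℝ => S u - (S m + c1 * (u - m) + c2 / 2 * (u - m)^2)) = ψ := by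
      funext y; simp only [hψ]; ring
    rw [← he]
    have hv : φ u = deriv S u - (c1 + c2 * (u - m)) := by simp only [hφ]; ring
    rw [hv]
    exact h3
  set ρ := |x - m| with hρ
  have hsub : Metric.closedBall m ρ ⊆ Metric.closedBall m δ :=
    Metric.closedBall_subset_closedBall hx
  have hxB : x ∈ Metric.closedBall m ρ := by simp [Real.dist_eq, hρ]
  have hmB : m ∈ Metric.closedBall m ρ := Metric.mem_closedBall_self (abs_nonneg _)
  have step2 := (convex_closedBall m ρ).norm_image_sub_le_of_norm_hasDerivWithin_le
    (f := ψ) (f' := φ)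
    (fun u hu => (hψd u (hsub hu)).hasDerivWithinAt)
    (fun u hu => by
      have hu' : |u - m| ≤ ρ := by simpa [Real.dist_eq] using hu
      calc ‖φ u‖ ≤ ε * |u - m| := by
            simpa [Real.norm_eq_abs] using step1 u (hsub hu)
        _ ≤ ε * ρ := by
            exact mul_le_mul_of_nonneg_left hu' hεnn) hmB hxB
  have : |ψ x| ≤ ε * ρ * ρ := by
    simpa [hψm, Real.norm_eq_abs] using step2
  calc |S x - S m - c1 * (x - m) - c2 / 2 * (x - m)^2| = |ψ x| := by rw [hψ]
    _ ≤ ε * ρ * ρ := this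
    _ = ε * (x - m)^2 := by rw [hρ]; rw [mul_assoc, abs_mul_abs_self]; ring_nf
set_option maxHeartbeats 1000000 in
lemma concavity_step (S : ℝ → ℝ)
    (hS : ContDiffOn ℝ 2 S (Set.Ioi (0 : ℝ)))
    (hssa : ∀ r R : ℝ, 0 < r → r ≤ R →
      (∫ θ in (0 : ℝ)..Real.pi,
          S (2 * r * R / (R + r - (R - r) * Real.cos θ)))
        ≤ Real.pi * S (Real.sqrt (r * R))) :
    ∀ R₀ > (0 : ℝ), deriv (deriv S) R₀ ≤ 0 := by
  intro R₀ hR₀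
  have main : ∀ ε > (0:ℝ), deriv (deriv S) R₀ ≤ 2 * ε := by
    intro ε hε
    obtain ⟨c2, hc2⟩ : ∃ c, c = deriv (deriv S) R₀ := ⟨_, rfl⟩
    obtain ⟨c1, hc1⟩ : ∃ c, c = deriv S R₀ := ⟨_, rfl⟩
    -- continuity of the second derivative
    have hS1 : ContDiffOn ℝ 1 (deriv S) (Set.Ioi (0:ℝ)) :=
      hS.deriv_of_isOpen isOpen_Ioi (by norm_num)
    have hS2 : ContDiffOn ℝ 0 (deriv (deriv S)) (Set.Ioi (0:ℝ)) :=
      hS1.deriv_of_isOpen isOpen_Ioi (by norm_num)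
    have hcA : ContinuousAt (deriv (deriv S)) R₀ :=
      hS2.continuousOn.continuousAt (isOpen_Ioi.mem_nhds hR₀)
    obtain ⟨δ₁, hδ₁, hδ₁p⟩ := Metric.continuousAt_iff.1 hcA ε hε
    obtain ⟨δ, hδdef⟩ : ∃ d : ℝ, d = min (δ₁/2) (R₀/2) := ⟨_, rfl⟩
    have hδ : 0 < δ := hδdef ▸ lt_min (by linarith) (by linarith)
    have hδm : δ < R₀ := by
      rw [hδdef]
      exact lt_of_le_of_lt (min_le_right _ _) (by linarith)
    have hcont : ∀ u, |u - R₀| ≤ δ → |deriv (deriv S) u - deriv (deriv S) R₀| ≤ ε := by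
      intro u hu
      have h1 : dist u R₀ < δ₁ := by
        rw [Real.dist_eq]
        refine lt_of_le_of_lt (le_trans hu ?_) (by linarith : δ₁/2 < δ₁)
        rw [hδdef]; exact min_le_left _ _
      have := hδ₁p h1
      rw [Real.dist_eq] at this
      exact this.le
    have htb := taylor_bound S R₀ δ ε hR₀ hδ hδm hS hcont
    -- the geometry : r = R₀/t, R = R₀*t
    obtain ⟨t, htdef⟩ : ∃ t : ℝ, t = 1 + δ/(2*R₀) := ⟨_, rfl⟩
    have ht1 : 1 < t := by
      have : 0 < δ/(2*R₀) := div_pos hδ (by linarith)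
      rw [htdef]; linarith
    have ht0 : 0 < t := by linarith
    obtain ⟨r, hrdef⟩ : ∃ x : ℝ, x = R₀/t := ⟨_, rfl⟩
    obtain ⟨R, hRdef⟩ : ∃ x : ℝ, x = R₀*t := ⟨_, rfl⟩
    have hr : 0 < r := hrdef ▸ div_pos hR₀ ht0
    have hR0t : R = R₀ + δ/2 := by
      rw [hRdef, htdef]; field_simp
    have hrR : r < R := by
      rw [hrdef, hRdef, div_lt_iff₀ ht0]; nlinarith
    have hrR0 : r * R = R₀^2 := by
      rw [hrdef, hRdef]; field_simp
    have hsqrt : Real.sqrt (r * R) = R₀ := by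
      rw [hrR0]; exact Real.sqrt_sq hR₀.le
    have hrd : R₀ - r ≤ δ/2 := by
      have h1 : R₀ - δ/2 ≤ r := by
        rw [hrdef, le_div_iff₀ ht0]
        have hR0t2 : R₀ * t = R₀ + δ/2 := by rw [htdef]; field_simp
        nlinarith
      linarith
    -- the averaging function
    obtain ⟨a, hadef⟩ : ∃ a : ℝ → ℝ,
        a = fun θ => 2 * r * R / (R + r - (R - r) * Real.cos θ) := ⟨_, rfl⟩
    have hDpos : ∀ θ : ℝ, 0 < R + r - (R - r) * Real.cos θ := by
      intro θ
      nlinarith [Real.neg_one_le_cos θ, Real.cos_le_one θ]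
    have hD1 : ∀ θ : ℝ, 2*r ≤ R + r - (R - r) * Real.cos θ := by
      intro θ
      nlinarith [Real.cos_le_one θ]
    have hD2 : ∀ θ : ℝ, R + r - (R - r) * Real.cos θ ≤ 2*R := by
      intro θ
      nlinarith [Real.neg_one_le_cos θ]
    have harange : ∀ θ : ℝ, r ≤ a θ ∧ a θ ≤ R := by
      intro θ
      rw [hadef]
      constructor
      · rw [le_div_iff₀ (hDpos θ)]
        nlinarith [mul_le_mul_of_nonneg_left (hD2 θ) hr.le]
      · rw [div_le_iff₀ (hDpos θ)]
        nlinarith [mul_le_mul_of_nonneg_left (hD1 θ) (by linarith : (0:ℝ) ≤ R)]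
    have hapos : ∀ θ : ℝ, 0 < a θ := fun θ => lt_of_lt_of_le hr (harange θ).1
    have haδ : ∀ θ : ℝ, |a θ - R₀| ≤ δ := by
      intro θ
      rw [abs_le]
      constructor
      · nlinarith [(harange θ).1]
      · nlinarith [(harange θ).2]
    -- continuity and integrability
    have hacont : Continuous a := by
      rw [hadef]
      exact continuous_const.div
        (continuous_const.sub (continuous_const.mul Real.continuous_cos))
        (fun θ => (hDpos θ).ne')
    have hScont : ContinuousOn S (Set.Ioi (0:ℝ)) := hS.continuousOn
    have hSa : Continuous (fun θ => S (a θ)) :=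
      hScont.comp_continuous hacont (fun θ => Set.mem_Ioi.2 (hapos θ))
    obtain ⟨ψ, hψdef⟩ : ∃ ψ : ℝ → ℝ,
        ψ = fun x => S x - S R₀ - c1 * (x - R₀) - c2/2 * (x - R₀)^2 := ⟨_, rfl⟩
    have hψa : Continuous (fun θ => ψ (a θ)) := by
      rw [hψdef]
      exact ((hSa.sub continuous_const).sub
        ((continuous_const.mul (hacont.sub continuous_const)))).sub
        (continuous_const.mul ((hacont.sub continuous_const).pow 2))
    have hsq : Continuous (fun θ => (a θ - R₀)^2) :=
      (hacont.sub continuous_const).pow 2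
    -- the key inequality
    have hkey : (∫ θ in (0:ℝ)..Real.pi, S (a θ)) ≤ Real.pi * S R₀ := by
      have h := hssa r R hr hrR.le
      rw [hsqrt] at h
      rw [hadef]
      exact h
    -- decomposition
    have hdecomp : ∀ θ : ℝ, S (a θ) =
        S R₀ + (c1 * (a θ - R₀) + (c2/2 * (a θ - R₀)^2 + ψ (a θ))) := by
      intro θ; rw [hψdef]; ring
    have hint1 : IntervalIntegrable (fun θ => c1 * (a θ - R₀)) MeasureTheory.volume 0 Real.pi :=
      (continuous_const.mul (hacont.sub continuous_const)).intervalIntegrable _ _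
    have hint2 : IntervalIntegrable (fun θ => c2/2 * (a θ - R₀)^2) MeasureTheory.volume 0 Real.pi :=
      (continuous_const.mul hsq).intervalIntegrable _ _
    have hint3 : IntervalIntegrable (fun θ => ψ (a θ)) MeasureTheory.volume 0 Real.pi :=
      hψa.intervalIntegrable _ _
    have hsplit : (∫ θ in (0:ℝ)..Real.pi, S (a θ))
        = Real.pi * S R₀ + ((∫ θ in (0:ℝ)..Real.pi, c1 * (a θ - R₀))
          + ((∫ θ in (0:ℝ)..Real.pi, c2/2 * (a θ - R₀)^2)
            + ∫ θ in (0:ℝ)..Real.pi, ψ (a θ))) := by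
      rw [intervalIntegral.integral_congr (g := fun θ =>
          S R₀ + (c1 * (a θ - R₀) + (c2/2 * (a θ - R₀)^2 + ψ (a θ))))
          (fun θ _ => hdecomp θ)]
      rw [intervalIntegral.integral_add (intervalIntegrable_const)
          (hint1.add (hint2.add hint3)),
        intervalIntegral.integral_add hint1 (hint2.add hint3),
        intervalIntegral.integral_add hint2 hint3,
        intervalIntegral.integral_const]
      rw [sub_zero, smul_eq_mul]
    -- first moment vanishes
    have hmom : (∫ θ in (0:ℝ)..Real.pi, c1 * (a θ - R₀)) = 0 := by
      rw [intervalIntegral.integral_const_mul]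
      rw [intervalIntegral.integral_sub (hacont.intervalIntegrable _ _)
        intervalIntegrable_const]
      have hia : (∫ θ in (0:ℝ)..Real.pi, a θ) = Real.pi * R₀ := by
        have h := integral_a r R hr hrR
        rw [hsqrt] at h
        rw [hadef]
        exact h
      rw [hia, intervalIntegral.integral_const, sub_zero, smul_eq_mul]
      ring
    obtain ⟨V, hVdef⟩ : ∃ v : ℝ, v = ∫ θ in (0:ℝ)..Real.pi, (a θ - R₀)^2 := ⟨_, rfl⟩
    have hVsplit : (∫ θ in (0:ℝ)..Real.pi, c2/2 * (a θ - R₀)^2) = c2/2 * V := by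
      rw [hVdef, intervalIntegral.integral_const_mul]
    -- remainder bound
    have hrem : -(ε * V) ≤ ∫ θ in (0:ℝ)..Real.pi, ψ (a θ) := by
      have hmono : (∫ θ in (0:ℝ)..Real.pi, -(ε * (a θ - R₀)^2))
          ≤ ∫ θ in (0:ℝ)..Real.pi, ψ (a θ) := by
        apply intervalIntegral.integral_mono_on Real.pi_pos.le
          ((continuous_const.mul hsq).neg.intervalIntegrable _ _) hint3
        intro θ _
        have h := htb (a θ) (haδ θ)
        rw [← hc1, ← hc2] at h
        have h2 := (abs_le.1 h).1
        rw [hψdef]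
        show -(ε * (a θ - R₀)^2) ≤ S (a θ) - S R₀ - c1 * (a θ - R₀) - c2/2 * (a θ - R₀)^2
        linarith
      calc -(ε * V) = ∫ θ in (0:ℝ)..Real.pi, -(ε * (a θ - R₀)^2) := by
            rw [hVdef, ← intervalIntegral.integral_const_mul,
              intervalIntegral.integral_neg]
        _ ≤ _ := hmono
    -- positivity of V
    have h3Rr : 0 < 3*R + r := by linarith
    obtain ⟨b, hbdef⟩ : ∃ b : ℝ, b = R₀ - 4*r*R/(3*R + r) := ⟨_, rfl⟩
    have hb : 0 < b := by
      rw [hbdef, sub_pos, div_lt_iff₀ h3Rr]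
      have h5 : δ ≤ 3*R + r - 4*R₀ := by linarith
      have h6 := mul_le_mul_of_nonneg_left h5 hR₀.le
      have h7 := mul_pos hR₀ hδ
      have h8 : R₀*(3*R + r) - 4*R₀^2 = R₀*(3*R+r-4*R₀) := by ring
      linarith [h6, h7, h8, hrR0]
    have hcos23 : Real.cos (2*Real.pi/3) = -(1/2) := by
      rw [show (2*Real.pi/3 : ℝ) = Real.pi - Real.pi/3 by ring, Real.cos_pi_sub,
        Real.cos_pi_div_three]
    have hVpos : Real.pi/3 * b^2 ≤ V := by
      have hadj : (∫ θ in (0:ℝ)..(2*Real.pi/3), (a θ - R₀)^2)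
          + (∫ θ in (2*Real.pi/3)..Real.pi, (a θ - R₀)^2) = V := by
        rw [hVdef]
        exact intervalIntegral.integral_add_adjacent_intervals
          (hsq.intervalIntegrable _ _) (hsq.intervalIntegrable _ _)
      have h1 : (0:ℝ) ≤ ∫ θ in (0:ℝ)..(2*Real.pi/3), (a θ - R₀)^2 :=
        intervalIntegral.integral_nonneg (by positivity) (fun θ _ => sq_nonneg _)
      have h2 : Real.pi/3 * b^2 ≤ ∫ θ in (2*Real.pi/3)..Real.pi, (a θ - R₀)^2 := by
        have hmono : (∫ _ in (2*Real.pi/3)..Real.pi, b^2)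
            ≤ ∫ θ in (2*Real.pi/3)..Real.pi, (a θ - R₀)^2 := by
          apply intervalIntegral.integral_mono_on (by linarith [Real.pi_pos])
            intervalIntegrable_const (hsq.intervalIntegrable _ _)
          intro θ hθ
          have hcosθ : Real.cos θ ≤ -(1/2) := by
            rw [← hcos23]
            exact Real.cos_le_cos_of_nonneg_of_le_pi (by positivity) hθ.2 hθ.1
          have hD : (3*R + r)/2 ≤ R + r - (R - r) * Real.cos θ := by nlinarith
          have haup : a θ ≤ 4*r*R/(3*R + r) := by
            rw [hadef, div_le_div_iff₀ (hDpos θ) h3Rr]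
            nlinarith [mul_pos hr (by linarith : (0:ℝ) < R)]
          have hba : b ≤ R₀ - a θ := by rw [hbdef]; linarith
          nlinarith
        calc Real.pi/3 * b^2 = (Real.pi - 2*Real.pi/3) * b^2 := by ring
          _ = ∫ _ in (2*Real.pi/3)..Real.pi, b^2 := by
              rw [intervalIntegral.integral_const, smul_eq_mul]
          _ ≤ _ := hmono
      linarith
    have hVpos' : 0 < V := lt_of_lt_of_le (by positivity) hVpos
    -- conclusion
    have hfinal : c2/2 * V ≤ ε * V := by
      rw [hsplit, hmom, hVsplit] at hkey
      linarith
    rw [← hc2]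
    by_contra hcon
    push_neg at hcon
    have := mul_lt_mul_of_pos_right (show ε < c2/2 by linarith) hVpos'
    linarith
  exact le_of_forall_pos_le_add (fun ε hε => by
    have := main (ε/2) (half_pos hε)
    linarith)
/-- The monotonicity step of the F-theorem in (2+1) dimensions: if the disk
entanglement entropy `S` is twice continuously differentiable on `(0,∞)` and
satisfies the averaged strong-subadditivity inequality
`∫₀^π S(2rR/(R+r−(R−r)cos θ)) dθ ≤ π·S(√(rR))` for all `0 < r ≤ R`, then `S` is
concave on `(0,∞)` and the renormalized entanglement entropy
`𝓕(R) = R·S′(R) − S(R)` is monotonically nonincreasing on `(0,∞)`. -/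
theorem F_theorem_monotonicity (S : ℝ → ℝ)
    (hS : ContDiffOn ℝ 2 S (Set.Ioi (0 : ℝ)))
    (hssa : ∀ r R : ℝ, 0 < r → r ≤ R →
      (∫ θ in (0 : ℝ)..Real.pi,
          S (2 * r * R / (R + r - (R - r) * Real.cos θ)))
        ≤ Real.pi * S (Real.sqrt (r * R))) :
    (∀ R > (0 : ℝ), deriv (deriv S) R ≤ 0) ∧
    AntitoneOn (fun R => R * deriv S R - S R) (Set.Ioi (0 : ℝ)) := by
  have hconc := concavity_step S hS hssa
  have hS1 : ContDiffOn ℝ 1 (deriv S) (Set.Ioi (0:ℝ)) :=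
    hS.deriv_of_isOpen isOpen_Ioi (by norm_num)
  have hSd : ∀ x ∈ Set.Ioi (0:ℝ), DifferentiableAt ℝ S x := fun x hx =>
    (hS.differentiableOn (by norm_num)).differentiableAt (isOpen_Ioi.mem_nhds hx)
  have hS1d : ∀ x ∈ Set.Ioi (0:ℝ), DifferentiableAt ℝ (deriv S) x := fun x hx =>
    (hS1.differentiableOn (by norm_num)).differentiableAt (isOpen_Ioi.mem_nhds hx)
  have hF : ∀ x ∈ Set.Ioi (0:ℝ),
      HasDerivAt (fun y => y * deriv S y - S y) (x * deriv (deriv S) x) x := by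
    intro x hx
    have h1 := (hasDerivAt_id x).mul (hS1d x hx).hasDerivAt
    have h2 := h1.sub (hSd x hx).hasDerivAt
    have he : (fun y => id y * deriv S y - S y) = fun y => y * deriv S y - S y := by
      funext y; simp
    rw [← he]
    refine h2.congr_deriv ?_
    simp [id_eq]
  refine ⟨hconc, ?_⟩
  apply antitoneOn_of_deriv_nonpos (convex_Ioi 0)
  · exact (continuousOn_id.mul hS1.continuousOn).sub hS.continuousOn
  · rw [interior_Ioi]
    intro x hx
    exact ((hF x hx).differentiableAt).differentiableWithinAt
  · rw [interior_Ioi]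
    intro x hx
    rw [(hF x hx).deriv]
    exact mul_nonpos_of_nonneg_of_nonpos (le_of_lt hx) (hconc x hx)
end

section
/- Iterated strong subadditivity for submodular set functions: let α be a type, f : Set α → ℝ a function satisfying f(X ∪ Y) + f(X ∩ Y) ≤ f(X) + f(Y) for all X, Y : Set α, let N ≥ 1 and X : Fin N → Set α. For 1 ≤ k ≤ N define Y_k := ⋃_{I : Finset (Fin N), I.card = k} ⋂_{i ∈ I} X i (the union of all k-fold intersections), so that Y_1 = ⋃ᵢ Xᵢ and Y_N = ⋂ᵢ Xᵢ. Then ∑_{k=1}^{N} f(Y_k) ≤ ∑_{i} f(X i). -/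
open scoped Classical

/-- The union of all `k`-fold intersections of the regions `X₁, …, X_N`. -/
def interUnion {α : Type*} {N : ℕ} (X : Fin N → Set α) (k : ℕ) : Set α :=
  ⋃ (I : Finset (Fin N)) (_ : I.card = k), ⋂ i ∈ I, X i

lemma mem_interUnion_iff {α : Type*} {N : ℕ} (X : Fin N → Set α) (k : ℕ) (x : α) :
    x ∈ interUnion X k ↔ k ≤ (Finset.univ.filter (fun i => x ∈ X i)).card := by
  constructor
  · intro hx
    simp only [interUnion, Set.mem_iUnion, Set.mem_iInter] at hx
    obtain ⟨I, hI, hx⟩ := hx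
    calc k = I.card := hI.symm
      _ ≤ _ := Finset.card_le_card (fun i hi =>
        Finset.mem_filter.2 ⟨Finset.mem_univ i, hx i hi⟩)
  · intro h
    obtain ⟨I, hsub, hcard⟩ := Finset.exists_subset_card_eq h
    simp only [interUnion, Set.mem_iUnion, Set.mem_iInter]
    exact ⟨I, hcard, fun i hi => (Finset.mem_filter.1 (hsub hi)).2⟩

lemma card_filter_snoc {α : Type*} {N : ℕ} (X : Fin N → Set α) (A : Set α) (x : α) :
    (Finset.univ.filter (fun i : Fin (N + 1) => x ∈ (Fin.snoc X A : Fin (N + 1) → Set α) i)).card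
      = (Finset.univ.filter (fun i => x ∈ X i)).card + (if x ∈ A then 1 else 0) := by
  rw [Finset.card_filter, Finset.card_filter, Fin.sum_univ_castSucc]
  simp [Fin.snoc_castSucc, Fin.snoc_last]

lemma interUnion_snoc {α : Type*} {N : ℕ} (X : Fin N → Set α) (A : Set α) (k : ℕ) :
    interUnion (Fin.snoc X A : Fin (N + 1) → Set α) (k + 1)
      = interUnion X (k + 1) ∪ (A ∩ interUnion X k) := by
  ext x
  simp only [Set.mem_union, Set.mem_inter_iff, mem_interUnion_iff, card_filter_snoc]
  by_cases hxA : x ∈ A <;> simp [hxA] <;> omega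

lemma interUnion_zero {α : Type*} {N : ℕ} (X : Fin N → Set α) :
    interUnion X 0 = Set.univ := by
  ext x; simp [mem_interUnion_iff]

lemma interUnion_eq_empty {α : Type*} {N : ℕ} (X : Fin N → Set α) {k : ℕ} (hk : N < k) :
    interUnion X k = ∅ := by
  ext x
  simp only [mem_interUnion_iff, Set.mem_empty_iff_false, iff_false, not_le]
  calc (Finset.univ.filter (fun i => x ∈ X i)).card ≤ Finset.univ.card :=
        Finset.card_filter_le _ _
    _ = N := by simp
    _ < k := hk

lemma interUnion_inter_subset {α : Type*} {N : ℕ} (X : Fin N → Set α) (A : Set α) (k : ℕ) :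
    interUnion X (k + 1) ∩ (A ∩ interUnion X k) = A ∩ interUnion X (k + 1) := by
  ext x
  simp only [Set.mem_inter_iff, mem_interUnion_iff]
  exact ⟨fun ⟨h1, h2, _⟩ => ⟨h2, h1⟩, fun ⟨h2, h1⟩ => ⟨h1, h2, by omega⟩⟩

lemma sum_Icc_one_eq_range {n : ℕ} (h : ℕ → ℝ) :
    ∑ k ∈ Finset.Icc 1 n, h k = ∑ k ∈ Finset.range n, h (k + 1) := by
  rw [← Finset.Ico_add_one_right_eq_Icc, Finset.sum_Ico_eq_sum_range]
  simp [Nat.add_comm]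

lemma aux_iterated {α : Type*} (f : Set α → ℝ)
    (hsub : ∀ X Y : Set α, f (X ∪ Y) + f (X ∩ Y) ≤ f X + f Y) :
    ∀ N : ℕ, ∀ X : Fin N → Set α,
      ∑ k ∈ Finset.Icc 1 N, f (interUnion X k) ≤ ∑ i, f (X i) := by
  intro N
  induction N with
  | zero => intro X; simp
  | succ N ih =>
    intro X
    set Y : Fin N → Set α := Fin.init X with hY
    set A : Set α := X (Fin.last N) with hA
    have hX : X = Fin.snoc Y A := (Fin.snoc_init_self X).symm
    set g : ℕ → ℝ := fun k => f (A ∩ interUnion Y k) with hg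
    have key : ∀ k : ℕ,
        f (interUnion X (k + 1)) + g (k + 1) ≤ f (interUnion Y (k + 1)) + g k := by
      intro k
      have h := hsub (interUnion Y (k + 1)) (A ∩ interUnion Y k)
      rw [interUnion_inter_subset] at h
      have hu : interUnion Y (k + 1) ∪ (A ∩ interUnion Y k) = interUnion X (k + 1) := by
        rw [hX, interUnion_snoc]
      rw [hu] at h
      exact h
    have sum_key : ∑ k ∈ Finset.range (N + 1), (f (interUnion X (k + 1)) + g (k + 1))
        ≤ ∑ k ∈ Finset.range (N + 1), (f (interUnion Y (k + 1)) + g k) :=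
      Finset.sum_le_sum fun k _ => key k
    rw [Finset.sum_add_distrib, Finset.sum_add_distrib] at sum_key
    have tele : ∑ k ∈ Finset.range (N + 1), g (k + 1)
        = ∑ k ∈ Finset.range (N + 1), g k + g (N + 1) - g 0 := by
      have h1 := Finset.sum_range_succ g (N + 1)
      have h2 := Finset.sum_range_succ' g (N + 1)
      linarith
    have hg0 : g 0 = f A := by rw [hg]; simp [interUnion_zero]
    have hgN : g (N + 1) = f (A ∩ interUnion Y (N + 1)) := rfl
    have hYN : interUnion Y (N + 1) = ∅ := interUnion_eq_empty Y (Nat.lt_succ_self N)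
    have hgN' : g (N + 1) = f ∅ := by rw [hgN, hYN, Set.inter_empty]
    have hsplit : ∑ k ∈ Finset.range (N + 1), f (interUnion Y (k + 1))
        = ∑ k ∈ Finset.range N, f (interUnion Y (k + 1)) + f ∅ := by
      rw [Finset.sum_range_succ, hYN]
    have hIH : ∑ k ∈ Finset.range N, f (interUnion Y (k + 1)) ≤ ∑ i, f (Y i) := by
      have h := ih Y
      rwa [sum_Icc_one_eq_range (fun k => f (interUnion Y k))] at h
    have hRHS : ∑ i, f (X i) = ∑ i, f (Y i) + f A := by
      rw [Fin.sum_univ_castSucc]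
      rfl
    rw [sum_Icc_one_eq_range]
    linarith

/-- Iterated strong subadditivity for submodular set functions:
`f(Y₁) + f(Y₂) + ⋯ + f(Y_N) ≤ ∑ᵢ f(Xᵢ)` where `Y_k` is the union of all
`k`-fold intersections of the `Xᵢ` (so `Y₁ = ⋃ᵢ Xᵢ` and `Y_N = ⋂ᵢ Xᵢ`). -/
theorem iterated_strong_subadditivity {α : Type*} {N : ℕ} (hN : 1 ≤ N)
    (f : Set α → ℝ)
    (hsub : ∀ X Y : Set α, f (X ∪ Y) + f (X ∩ Y) ≤ f X + f Y)
    (X : Fin N → Set α) :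
    ∑ k ∈ Finset.Icc 1 N, f (interUnion X k) ≤ ∑ i, f (X i) := by
  exact aux_iterated f hsub N X
end
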